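/- arXiv:2008.10371 — 2 statements merged into one kernel-verified Lean document; each statement's English description precedes it below -/
import Mathlib

section
/- Cunningham–Edmonds base case characterization: a biconnected simplicial graph G with the property that every 2-cut {x,y} has some {x,y}-component whose completion is 'as complex as G' (formally: G admits no 2-cut splitting it into strictly simpler pieces) is either triconnected, a cycle, or homeomorphic to a theta graph Θ_n for some n ≥ 3. In particular: a biconnected simplicial graph that is not triconnected and not a cycle and not homeomorphic to any Θ_n admits a 2-cut {x,y} such that each {x,y}-component has strictly fewer edges than G after completion. -/
namespace GraphDecomposition

variable {V : Type}

/-- Adjacency within a set `S` of allowed vertices. -/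
def adjIn (G : SimpleGraph V) (S : Set V) (a b : V) : Prop :=
  G.Adj a b ∧ a ∈ S ∧ b ∈ S

/-- Reachability within a set `S` of allowed vertices. -/
def reachIn (G : SimpleGraph V) (S : Set V) (a b : V) : Prop :=
  Relation.ReflTransGen (adjIn G S) a b

/-- Two walks with the same endpoints are internally disjoint. -/
def InternallyDisjoint {G : SimpleGraph V} {u w : V} (p q : G.Walk u w) : Prop :=
  ∀ x, x ∈ p.support → x ∈ q.support → x = u ∨ x = w

/-- Biconnectivity: any two distinct vertices are joined by two distinct
internally disjoint paths. -/
def Biconnected (G : SimpleGraph V) : Prop :=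
  ∀ u w : V, u ≠ w → ∃ p q : G.Walk u w, p.IsPath ∧ q.IsPath ∧ p ≠ q ∧
    InternallyDisjoint p q

/-- Triconnectivity: any two distinct vertices are joined by three pairwise
distinct, pairwise internally disjoint paths. -/
def Triconnected (G : SimpleGraph V) : Prop :=
  ∀ u w : V, u ≠ w → ∃ p q r : G.Walk u w, p.IsPath ∧ q.IsPath ∧ r.IsPath ∧
    p ≠ q ∧ p ≠ r ∧ q ≠ r ∧
    InternallyDisjoint p q ∧ InternallyDisjoint p r ∧ InternallyDisjoint q r

/-- The degree of a vertex. -/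
noncomputable def deg (G : SimpleGraph V) (v : V) : ℕ := (G.neighborSet v).ncard

/-- `G` is a cycle graph: nonempty, connected, and every vertex bivalent. -/
def IsCycleGraph (G : SimpleGraph V) : Prop :=
  Nonempty V ∧ G.Connected ∧ ∀ v, deg G v = 2

/-- `G` is homeomorphic to a theta graph `Θ_n` for some `n ≥ 3`: it is
connected with two distinct vertices of equal degree `n ≥ 3` and all other
vertices bivalent. -/
def IsThetaGraph (G : SimpleGraph V) : Prop :=
  G.Connected ∧ ∃ a b : V, a ≠ b ∧ 3 ≤ deg G a ∧ deg G a = deg G b ∧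
    ∀ v, v ≠ a → v ≠ b → deg G v = 2


section Aux
open SimpleGraph

/-! ### Restricted graphs -/


def restrict (G : SimpleGraph V) (S : Set V) : SimpleGraph V where
  Adj a b := G.Adj a b ∧ a ∈ S ∧ b ∈ S
  symm := by constructor; rintro a b ⟨h, ha, hb⟩; exact ⟨h.symm, hb, ha⟩
  loopless := by constructor; rintro a ⟨h, -, -⟩; exact G.irrefl h

lemma restrict_adj {G : SimpleGraph V} {S : Set V} {a b : V} :
    (restrict G S).Adj a b ↔ G.Adj a b ∧ a ∈ S ∧ b ∈ S := Iff.rfl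

lemma restrict_le {G : SimpleGraph V} {S : Set V} : restrict G S ≤ G := by
  rintro a b ⟨h, -, -⟩; exact h

lemma adjIn_eq_restrict {G : SimpleGraph V} {S : Set V} :
    adjIn G S = (restrict G S).Adj := rfl

/-- Lift a walk of a restricted graph to the big graph. -/
def upWalk {G : SimpleGraph V} {S : Set V} {a b : V} (p : (restrict G S).Walk a b) :
    G.Walk a b :=
  p.transfer G (fun e he => SimpleGraph.edgeSet_mono restrict_le (p.edges_subset_edgeSet he))

@[simp] lemma upWalk_support {G : SimpleGraph V} {S : Set V} {a b : V}
    (p : (restrict G S).Walk a b) : (upWalk p).support = p.support :=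
  SimpleGraph.Walk.support_transfer _ _

lemma upWalk_isPath {G : SimpleGraph V} {S : Set V} {a b : V}
    {p : (restrict G S).Walk a b} (hp : p.IsPath) : (upWalk p).IsPath :=
  SimpleGraph.Walk.IsPath.transfer _ hp

/-- Push a walk of `G` whose support lies in `S` down to `restrict G S`. -/
lemma downWalk {G : SimpleGraph V} {S : Set V} {a b : V} (p : G.Walk a b)
    (h : ∀ v ∈ p.support, v ∈ S) :
    ∃ q : (restrict G S).Walk a b, q.support = p.support := by
  induction p with
  | nil => exact ⟨SimpleGraph.Walk.nil, rfl⟩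
  | cons hadj p ih =>
      rename_i u v w
      obtain ⟨q, hq⟩ := ih (fun x hx => h x (by simp [hx]))
      refine ⟨SimpleGraph.Walk.cons ⟨hadj, h u (by simp), h v (by simp)⟩ q, ?_⟩
      exact congrArg (List.cons u) hq

/-- Move a walk between two restrictions, given a support condition. -/
lemma moveWalk {G : SimpleGraph V} {S T : Set V} {a b : V} (p : (restrict G S).Walk a b)
    (h : ∀ v ∈ p.support, v ∈ T) :
    ∃ q : (restrict G T).Walk a b, q.support = p.support := by
  obtain ⟨q, hq⟩ := downWalk (G := G) (upWalk p) (by simpa using h)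
  exact ⟨q, by simpa using hq⟩

lemma walk_support_mem {G : SimpleGraph V} {S : Set V} {a b : V}
    (p : (restrict G S).Walk a b) : ∀ v ∈ p.support, v = a ∨ v ∈ S := by
  induction p with
  | nil => intro v hv; left; simpa using hv
  | cons hadj p ih =>
      intro v hv
      rcases List.mem_cons.mp (by simpa using hv) with h | h
      · exact Or.inl h
      · rcases ih v h with h' | h'
        · subst h'; exact Or.inr hadj.2.2
        · exact Or.inr h'

/-! ### reachIn and walks -/

lemma reachIn_iff_walk {G : SimpleGraph V} {S : Set V} {a b : V} :
    reachIn G S a b ↔ Nonempty ((restrict G S).Walk a b) := by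
  rw [show reachIn G S a b = Relation.ReflTransGen (restrict G S).Adj a b from rfl]
  rw [← SimpleGraph.reachable_iff_reflTransGen]
  rfl

lemma reachIn_symm {G : SimpleGraph V} {S : Set V} {a b : V}
    (h : reachIn G S a b) : reachIn G S b a := by
  rw [reachIn_iff_walk] at h ⊢
  exact ⟨h.some.reverse⟩

lemma reachIn_trans {G : SimpleGraph V} {S : Set V} {a b c : V}
    (h : reachIn G S a b) (h' : reachIn G S b c) : reachIn G S a c :=
  Relation.ReflTransGen.trans h h'

lemma reachIn_mem_right {G : SimpleGraph V} {S : Set V} {a b : V}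
    (h : reachIn G S a b) (hne : a ≠ b) : b ∈ S := by
  induction h with
  | refl => exact absurd rfl hne
  | tail _ h2 _ => exact h2.2.2

lemma reachIn_mono {G : SimpleGraph V} {S T : Set V} (hST : S ⊆ T) {a b : V}
    (h : reachIn G S a b) : reachIn G T a b := by
  refine Relation.ReflTransGen.mono ?_ _ _ h
  rintro x y ⟨h1, h2, h3⟩
  exact ⟨h1, hST h2, hST h3⟩



/-- A set `S` separates `A` from `B` in `G`: every `A`–`B` walk meets `S`. -/
def Sep (G : SimpleGraph V) (A B S : Set V) : Prop :=
  ∀ ⦃a b : V⦄, a ∈ A → b ∈ B → ∀ p : G.Walk a b, ∃ s ∈ S, s ∈ p.support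

/-- A path from `A` to `B`. -/
structure PB (G : SimpleGraph V) (A B : Set V) where
  a : V
  b : V
  walk : G.Walk a b
  ha : a ∈ A
  hb : b ∈ B
  path : walk.IsPath

def PDisj {G : SimpleGraph V} {A B : Set V} (P Q : PB G A B) : Prop :=
  ∀ v, v ∈ P.walk.support → v ∈ Q.walk.support → False

lemma PDisj.symm {G : SimpleGraph V} {A B : Set V} {P Q : PB G A B}
    (h : PDisj P Q) : PDisj Q P := fun v h1 h2 => h v h2 h1

/-- Conclusion of Menger's theorem: `k` pairwise disjoint `A`–`B` paths. -/
def MengerFam (G : SimpleGraph V) (A B : Set V) (k : ℕ) : Prop :=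
  ∃ L : List (PB G A B), L.length = k ∧ L.Pairwise PDisj

lemma sep_univ (G : SimpleGraph V) (A B : Set V) : Sep G A B Set.univ := by
  intro a b _ _ p
  exact ⟨a, trivial, p.start_mem_support⟩

lemma sep_of_superset {G : SimpleGraph V} {A B S T : Set V} (h : Sep G A B S)
    (hST : S ⊆ T) : Sep G A B T := by
  intro a b ha hb p
  obtain ⟨s, hs, hsp⟩ := h ha hb p
  exact ⟨s, hST hs, hsp⟩

/-- First hit of a walk into a target set `S`, assuming the walk meets `S`. -/
lemma firstHit {G : SimpleGraph V} {S : Set V} {a b : V} (p : G.Walk a b)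
    (hhit : ∃ s ∈ S, s ∈ p.support) :
    ∃ (s : V) (hs : s ∈ S) (q : G.Walk a s),
      (∀ v ∈ q.support, v ∈ p.support) ∧ (∀ v ∈ q.support, v ∈ S → v = s) ∧
      (p.IsPath → q.IsPath) := by
  induction p with
  | nil =>
      obtain ⟨s, hs, hsp⟩ := hhit
      simp only [SimpleGraph.Walk.support_nil, List.mem_singleton] at hsp
      subst hsp
      exact ⟨s, hs, SimpleGraph.Walk.nil, by simp, by simp, fun _ => SimpleGraph.Walk.IsPath.nil⟩
  | cons hadj p ih =>
      rename_i u v w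
      by_cases hu : u ∈ S
      · exact ⟨u, hu, SimpleGraph.Walk.nil, by simp, by simp, fun _ => SimpleGraph.Walk.IsPath.nil⟩
      · have hhit' : ∃ s ∈ S, s ∈ p.support := by
          obtain ⟨s, hs, hsp⟩ := hhit
          rcases List.mem_cons.mp (by simpa using hsp) with h | h
          · exact absurd (h ▸ hs) hu
          · exact ⟨s, hs, h⟩
        obtain ⟨s, hs, q, hsub, honce, hpath⟩ := ih hhit'
        refine ⟨s, hs, SimpleGraph.Walk.cons hadj q, ?_, ?_, ?_⟩
        · intro x hx
          rcases List.mem_cons.mp (by simpa using hx) with h | h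
          · simp [h]
          · simp [hsub x h]
        · intro x hx hxS
          rcases List.mem_cons.mp (by simpa using hx) with h | h
          · exact absurd (h ▸ hxS) hu
          · exact honce x h hxS
        · intro hp
          rw [SimpleGraph.Walk.cons_isPath_iff] at hp ⊢
          exact ⟨hpath hp.1, fun hq => hp.2 (hsub u hq)⟩

variable [Fintype V]

/-- In a path, the endpoint does not appear in a proper initial segment. -/
lemma end_not_mem_takeUntil [DecidableEq V] {G : SimpleGraph V} {a b v : V}
    {p : G.Walk a b} (hp : p.IsPath) (hv : v ∈ p.support) (hne : v ≠ b) :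
    b ∉ (p.takeUntil v hv).support := by
  intro hbmem
  have hspec := p.take_spec hv
  have hnodup : p.support.Nodup := (SimpleGraph.Walk.isPath_def p).mp hp
  rw [← hspec, SimpleGraph.Walk.support_append] at hnodup
  have hbd : b ∈ (p.dropUntil v hv).support := SimpleGraph.Walk.end_mem_support _
  have : b ∈ (p.dropUntil v hv).support.tail := by
    cases hsupp : (p.dropUntil v hv).support with
    | nil => exact absurd (hsupp ▸ hbd) (by simp)
    | cons x xs =>
        have hx : x = v := by
          have := SimpleGraph.Walk.support_eq_cons (p.dropUntil v hv)
          rw [hsupp] at this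
          exact (List.cons_eq_cons.mp this).1
        rw [hsupp] at hbd
        rcases List.mem_cons.mp hbd with h | h
        · exact (hne (h.trans hx).symm).elim
        · simpa [hsupp] using h
  exact (List.disjoint_of_nodup_append hnodup) hbmem this


/-! ### Sides of a separator -/

/-- Vertices reachable from `A` avoiding `S`. -/
def sideOf (G : SimpleGraph V) (A S : Set V) : Set V :=
  {v | ∃ a ∈ A, reachIn G Sᶜ a v}

lemma subset_sideOf {G : SimpleGraph V} {A S : Set V} : A ⊆ sideOf G A S :=
  fun a ha => ⟨a, ha, Relation.ReflTransGen.refl⟩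

lemma no_avoiding_reach {G : SimpleGraph V} {A B S : Set V} (hsep : Sep G A B S)
    (hAB : A ∩ B = ∅) {a b : V} (ha : a ∈ A) (hb : b ∈ B) : ¬ reachIn G Sᶜ a b := by
  intro h
  rcases eq_or_ne a b with rfl | hne
  · exact absurd (Set.mem_inter ha hb) (by simp [hAB])
  · obtain ⟨q⟩ := reachIn_iff_walk.mp h
    obtain ⟨s, hsS, hsp⟩ := hsep ha hb (upWalk q)
    rw [upWalk_support] at hsp
    rcases walk_support_mem q s hsp with rfl | hs'
    · cases q with
      | nil => exact hne rfl
      | cons hadj _ => exact hadj.2.1 hsS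
    · exact hs' hsS

lemma sides_disjoint {G : SimpleGraph V} {A B S : Set V} (hsep : Sep G A B S)
    (hAB : A ∩ B = ∅) {v : V} (hvA : v ∈ sideOf G A S) (hvB : v ∈ sideOf G B S) : False := by
  obtain ⟨a, ha, hra⟩ := hvA
  obtain ⟨b, hb, hrb⟩ := hvB
  exact no_avoiding_reach hsep hAB ha hb (reachIn_trans hra (reachIn_symm hrb))

/-- Key transfer: a separator of `A` from `S` inside the `A`-side graph
separates `A` from `B` in `G`. -/
lemma sepSide_transfer {G : SimpleGraph V} {A B S T : Set V} (hsep : Sep G A B S)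
    (hT : Sep (restrict G (sideOf G A S ∪ S)) A S T) : Sep G A B T := by
  classical
  intro a b ha hb p
  obtain ⟨s0, hs0, hs0p⟩ := hsep ha hb p.bypass
  obtain ⟨s, hsS, q, hsub, honce, hqpath⟩ := firstHit p.bypass ⟨s0, hs0, hs0p⟩
  have hqp : q.IsPath := hqpath (p.bypass_isPath)
  -- every vertex of q lies in sideOf G A S ∪ S
  have hreg : ∀ v ∈ q.support, v ∈ sideOf G A S ∪ S := by
    intro v hv
    rcases eq_or_ne v s with rfl | hne
    · exact Or.inr hsS
    · left
      have hsnot : s ∉ (q.takeUntil v hv).support := end_not_mem_takeUntil hqp hv hne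
      have hpre : ∀ x ∈ (q.takeUntil v hv).support, x ∈ Sᶜ := by
        intro x hx
        intro hxS
        exact hsnot ((honce x (q.support_takeUntil_subset hv hx) hxS) ▸ hx)
      obtain ⟨q', -⟩ := downWalk (q.takeUntil v hv) hpre
      exact ⟨a, ha, reachIn_iff_walk.mpr ⟨q'⟩⟩
  obtain ⟨q'', hq''⟩ := downWalk q hreg
  obtain ⟨t, htT, htq⟩ := hT ha hsS q''
  rw [hq''] at htq
  exact ⟨t, htT, p.support_bypass_subset (hsub t htq)⟩

/-- The mirrored transfer, for the `B`-side. -/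
lemma sepSideB_transfer {G : SimpleGraph V} {A B S T : Set V} (hsep : Sep G A B S)
    (hT : Sep (restrict G (sideOf G B S ∪ S)) S B T) : Sep G A B T := by
  classical
  intro a b ha hb p
  obtain ⟨s0, hs0, hs0p⟩ := hsep ha hb p.bypass
  have hs0r : s0 ∈ p.bypass.reverse.support := by
    rw [SimpleGraph.Walk.support_reverse]; exact List.mem_reverse.mpr hs0p
  obtain ⟨s, hsS, q, hsub, honce, hqpath⟩ := firstHit p.bypass.reverse ⟨s0, hs0, hs0r⟩
  have hqp : q.IsPath := hqpath (p.bypass_isPath.reverse)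
  have hreg : ∀ v ∈ q.support, v ∈ sideOf G B S ∪ S := by
    intro v hv
    rcases eq_or_ne v s with rfl | hne
    · exact Or.inr hsS
    · left
      have hsnot : s ∉ (q.takeUntil v hv).support := end_not_mem_takeUntil hqp hv hne
      have hpre : ∀ x ∈ (q.takeUntil v hv).support, x ∈ Sᶜ := by
        intro x hx hxS
        exact hsnot ((honce x (q.support_takeUntil_subset hv hx) hxS) ▸ hx)
      obtain ⟨q', -⟩ := downWalk (q.takeUntil v hv) hpre
      exact ⟨b, hb, reachIn_iff_walk.mpr ⟨q'⟩⟩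
  obtain ⟨q'', hq''⟩ := downWalk q hreg
  obtain ⟨t, htT, htq⟩ := hT hsS hb q''.reverse
  have : t ∈ q''.support := by
    rw [SimpleGraph.Walk.support_reverse] at htq; exact List.mem_reverse.mp htq
  rw [hq''] at this
  have : t ∈ p.bypass.support := by
    have h2 := hsub t this
    rw [SimpleGraph.Walk.support_reverse] at h2; exact List.mem_reverse.mp h2
  exact ⟨t, htT, p.support_bypass_subset this⟩

/-! ### Path gluing and family helpers -/

lemma isPath_append {G : SimpleGraph V} {u v w : V} {p : G.Walk u v} {q : G.Walk v w}
    (hp : p.IsPath) (hq : q.IsPath) (h : ∀ x, x ∈ p.support → x ∈ q.support → x = v) :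
    (p.append q).IsPath := by
  rw [SimpleGraph.Walk.isPath_def, SimpleGraph.Walk.support_append, List.nodup_append]
  refine ⟨(SimpleGraph.Walk.isPath_def p).mp hp,
    ((SimpleGraph.Walk.isPath_def q).mp hq).tail, ?_⟩
  intro x hx1 y hx2 rfl
  have hxq : x ∈ q.support := by
    have := SimpleGraph.Walk.support_eq_cons q
    rw [this]; exact List.mem_cons_of_mem _ hx2
  have hxv : x = v := h x hx1 hxq
  subst hxv
  have := SimpleGraph.Walk.support_eq_cons q
  have hnd := (SimpleGraph.Walk.isPath_def q).mp hq
  rw [this] at hnd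
  exact (List.nodup_cons.mp hnd).1 hx2

lemma mem_support_append {G : SimpleGraph V} {u v w : V} {p : G.Walk u v} {q : G.Walk v w}
    {x : V} (hx : x ∈ (p.append q).support) : x ∈ p.support ∨ x ∈ q.support := by
  rw [SimpleGraph.Walk.mem_support_append_iff] at hx
  exact hx

/-- Lift a path-between along a subgraph relation. -/
def PB.lift {G H : SimpleGraph V} {A B A' B' : Set V} (P : PB G A B)
    (hGH : ∀ e ∈ P.walk.edges, e ∈ H.edgeSet) (hA : P.a ∈ A') (hB : P.b ∈ B') : PB H A' B' :=
  ⟨P.a, P.b, P.walk.transfer H hGH, hA, hB, P.path.transfer hGH⟩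

lemma PB.lift_support {G H : SimpleGraph V} {A B A' B' : Set V} (P : PB G A B)
    (hGH : ∀ e ∈ P.walk.edges, e ∈ H.edgeSet) (hA : P.a ∈ A') (hB : P.b ∈ B') :
    (P.lift hGH hA hB).walk.support = P.walk.support :=
  SimpleGraph.Walk.support_transfer _ _

def PB.flip {G : SimpleGraph V} {A B : Set V} (P : PB G A B) : PB G B A :=
  ⟨P.b, P.a, P.walk.reverse, P.hb, P.ha, P.path.reverse⟩

lemma PB.flip_support {G : SimpleGraph V} {A B : Set V} (P : PB G A B) {v : V} :
    v ∈ P.flip.walk.support ↔ v ∈ P.walk.support := by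
  show v ∈ P.walk.reverse.support ↔ _
  rw [SimpleGraph.Walk.support_reverse]
  exact List.mem_reverse

lemma mengerFam_mono {G : SimpleGraph V} {A B : Set V} {k m : ℕ} (h : MengerFam G A B m)
    (hk : k ≤ m) : MengerFam G A B k := by
  obtain ⟨L, hL, hP⟩ := h
  exact ⟨L.take k, by simp [hL, hk], hP.sublist (List.take_sublist _ _)⟩

lemma mengerFam_comm {G : SimpleGraph V} {A B : Set V} {k : ℕ} (h : MengerFam G B A k) :
    MengerFam G A B k := by
  obtain ⟨L, hL, hP⟩ := h
  refine ⟨L.map PB.flip, by simp [hL], ?_⟩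
  rw [List.pairwise_map]
  refine hP.imp ?_
  intro P Q h v hv1 hv2
  exact h v (P.flip_support.mp hv1) (Q.flip_support.mp hv2)

lemma sep_comm {G : SimpleGraph V} {A B S : Set V} (h : Sep G A B S) : Sep G B A S := by
  intro b a hb ha p
  obtain ⟨s, hs, hsp⟩ := h ha hb p.reverse
  refine ⟨s, hs, ?_⟩
  rw [SimpleGraph.Walk.support_reverse] at hsp
  exact List.mem_reverse.mp hsp

lemma pairwise_pdisj_forall {G : SimpleGraph V} {A B : Set V} {L : List (PB G A B)}
    (h : L.Pairwise PDisj) {P Q : PB G A B} (hP : P ∈ L) (hQ : Q ∈ L) (hne : P ≠ Q) :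
    PDisj P Q :=
  by
  letI : Std.Symm (PDisj : PB G A B → PB G A B → Prop) := ⟨fun _ _ h' => h'.symm⟩
  exact h.forall hP hQ hne

/-! ### The measure -/

variable [Fintype V]

/-- Weight used in the termination measure. -/
private def WW (V : Type) [Fintype V] : ℕ := 2 * Fintype.card V + 2

noncomputable def mu (G : SimpleGraph V) (A B : Set V) : ℕ :=
  G.edgeSet.ncard * WW V * WW V + (A ∩ B).ncard * WW V + (A.ncard + B.ncard)

lemma ncard_le_card (A : Set V) : A.ncard ≤ Fintype.card V := by
  have := Set.ncard_le_ncard (Set.subset_univ A) Set.finite_univ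
  rwa [Set.ncard_univ, Nat.card_eq_fintype_card] at this

lemma mu_comm (G : SimpleGraph V) (A B : Set V) : mu G A B = mu G B A := by
  unfold mu; rw [Set.inter_comm, Nat.add_comm (A.ncard)]

lemma mu_lt_of_edges_lt {G G' : SimpleGraph V} {A B A' B' : Set V}
    (h : G'.edgeSet.ncard < G.edgeSet.ncard) : mu G' A' B' < mu G A B := by
  unfold mu
  have h1 : (A' ∩ B').ncard ≤ Fintype.card V := ncard_le_card _
  have h2 : A'.ncard ≤ Fintype.card V := ncard_le_card _
  have h3 : B'.ncard ≤ Fintype.card V := ncard_le_card _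
  have hW : (A' ∩ B').ncard * WW V + (A'.ncard + B'.ncard) < WW V * WW V := by
    have hlt : (A' ∩ B').ncard < WW V := by unfold WW; omega
    have h2C : A'.ncard + B'.ncard < WW V := by unfold WW; omega
    have hstep : ((A' ∩ B').ncard + 1) * WW V ≤ WW V * WW V :=
      Nat.mul_le_mul_right _ (by omega)
    nlinarith
  have hE : G'.edgeSet.ncard * WW V * WW V + WW V * WW V ≤ G.edgeSet.ncard * WW V * WW V := by
    have : (G'.edgeSet.ncard + 1) * WW V * WW V ≤ G.edgeSet.ncard * WW V * WW V :=
      Nat.mul_le_mul_right _ (Nat.mul_le_mul_right _ (by omega))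
    nlinarith
  omega

lemma edges_restrict_le (G : SimpleGraph V) (X : Set V) :
    (restrict G X).edgeSet.ncard ≤ G.edgeSet.ncard :=
  Set.ncard_le_ncard (SimpleGraph.edgeSet_mono restrict_le) (G.edgeSet.toFinite)

lemma mu_cleanup1 {G : SimpleGraph V} {A B : Set V} {a : V} (ha : a ∈ A ∩ B) :
    mu (restrict G {a}ᶜ) (A \ {a}) (B \ {a}) < mu G A B := by
  unfold mu
  have hE : (restrict G {a}ᶜ).edgeSet.ncard ≤ G.edgeSet.ncard := edges_restrict_le _ _
  have hI : (A \ {a}) ∩ (B \ {a}) = (A ∩ B) \ {a} := by ext x; simp; tauto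
  have hIlt : ((A \ {a}) ∩ (B \ {a})).ncard < (A ∩ B).ncard := by
    rw [hI]; exact Set.ncard_diff_singleton_lt_of_mem ha ((A ∩ B).toFinite)
  have hA' : (A \ {a}).ncard ≤ A.ncard := Set.ncard_le_ncard Set.diff_subset (A.toFinite)
  have hB' : (B \ {a}).ncard ≤ B.ncard := Set.ncard_le_ncard Set.diff_subset (B.toFinite)
  have h2 : A.ncard ≤ Fintype.card V := ncard_le_card _
  have h3 : B.ncard ≤ Fintype.card V := ncard_le_card _
  have : (A \ {a}).ncard + (B \ {a}).ncard < WW V := by unfold WW; omega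
  have hmul : G.edgeSet.ncard * WW V * WW V ≥ (restrict G {a}ᶜ).edgeSet.ncard * WW V * WW V :=
    Nat.mul_le_mul_right _ (Nat.mul_le_mul_right _ hE)
  have hmul2 : ((A \ {a}) ∩ (B \ {a})).ncard * WW V + WW V ≤ (A ∩ B).ncard * WW V := by
    have : (((A \ {a}) ∩ (B \ {a})).ncard + 1) * WW V ≤ (A ∩ B).ncard * WW V :=
      Nat.mul_le_mul_right _ (by omega)
    nlinarith
  omega

lemma mu_cleanup2 {G : SimpleGraph V} {A B : Set V} {a : V} (ha : a ∈ A)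
    (hAB : A ∩ B = ∅) : mu G (A \ {a}) B < mu G A B := by
  unfold mu
  have hI : (A \ {a}) ∩ B = ∅ := by
    apply Set.eq_empty_of_subset_empty; rw [← hAB]
    exact Set.inter_subset_inter_left _ Set.diff_subset
  rw [hI, hAB]
  have : (A \ {a}).ncard < A.ncard := Set.ncard_diff_singleton_lt_of_mem ha (A.toFinite)
  omega

/-! ### The splitting step of Menger's theorem -/

lemma split_case {G : SimpleGraph V} {A B S : Set V} {k m : ℕ}
    (hAB : A ∩ B = ∅) (hsep : Sep G A B S) (hScard : S.ncard = m)
    (hmin : ∀ T, Sep G A B T → m ≤ T.ncard) (hk : k ≤ m)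
    (ih : ∀ (G' : SimpleGraph V) (A' B' : Set V) (k' : ℕ), mu G' A' B' < mu G A B →
      (∀ T, Sep G' A' B' T → k' ≤ T.ncard) → MengerFam G' A' B' k')
    (hEA : (restrict G (sideOf G A S ∪ S)).edgeSet.ncard < G.edgeSet.ncard)
    (hEB : (restrict G (sideOf G B S ∪ S)).edgeSet.ncard < G.edgeSet.ncard) :
    MengerFam G A B k := by
  classical
  obtain ⟨L1, hL1len, hL1pw⟩ := ih (restrict G (sideOf G A S ∪ S)) A S m
      (mu_lt_of_edges_lt hEA) (fun T hT => hmin T (sepSide_transfer hsep hT))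
  obtain ⟨L2, hL2len, hL2pw⟩ := ih (restrict G (sideOf G B S ∪ S)) S B m
      (mu_lt_of_edges_lt hEB) (fun T hT => hmin T (sepSideB_transfer hsep hT))
  -- trim the A-side paths so they meet `S` only at their endpoint
  have htrim1 : ∀ P : PB (restrict G (sideOf G A S ∪ S)) A S,
      ∃ P' : PB (restrict G (sideOf G A S ∪ S)) A S,
      (∀ v ∈ P'.walk.support, v ∈ P.walk.support) ∧
      (∀ v ∈ P'.walk.support, v ∈ S → v = P'.b) := by
    intro P
    obtain ⟨s, hsS, q, hsub, honce, hqpath⟩ :=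
      firstHit P.walk ⟨P.b, P.hb, P.walk.end_mem_support⟩
    exact ⟨⟨P.a, s, q, P.ha, hsS, hqpath P.path⟩, hsub, honce⟩
  choose tr1 htr1sub htr1once using htrim1
  -- trim the B-side paths so they meet `S` only at their start
  have htrim2 : ∀ Q : PB (restrict G (sideOf G B S ∪ S)) S B,
      ∃ Q' : PB (restrict G (sideOf G B S ∪ S)) S B,
      (∀ v ∈ Q'.walk.support, v ∈ Q.walk.support) ∧
      (∀ v ∈ Q'.walk.support, v ∈ S → v = Q'.a) := by
    intro Q
    have hmem : Q.a ∈ Q.walk.reverse.support := by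
      rw [SimpleGraph.Walk.support_reverse]
      exact List.mem_reverse.mpr Q.walk.start_mem_support
    obtain ⟨s, hsS, q, hsub, honce, hqpath⟩ := firstHit Q.walk.reverse ⟨Q.a, Q.ha, hmem⟩
    refine ⟨⟨s, Q.b, q.reverse, hsS, Q.hb, (hqpath Q.path.reverse).reverse⟩, ?_, ?_⟩
    · intro v hv
      rw [SimpleGraph.Walk.support_reverse, List.mem_reverse] at hv
      have := hsub v hv
      rw [SimpleGraph.Walk.support_reverse, List.mem_reverse] at this
      exact this
    · intro v hv hvS
      rw [SimpleGraph.Walk.support_reverse, List.mem_reverse] at hv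
      exact honce v hv hvS
  choose tr2 htr2sub htr2once using htrim2
  set L1' : List (PB (restrict G (sideOf G A S ∪ S)) A S) := L1.map tr1 with hL1'
  set L2' : List (PB (restrict G (sideOf G B S ∪ S)) S B) := L2.map tr2 with hL2'
  have hL1'pw : L1'.Pairwise PDisj := by
    rw [hL1', List.pairwise_map]
    exact hL1pw.imp (fun {P Q} h v hv1 hv2 => h v (htr1sub P v hv1) (htr1sub Q v hv2))
  have hL2'pw : L2'.Pairwise PDisj := by
    rw [hL2', List.pairwise_map]
    exact hL2pw.imp (fun {P Q} h v hv1 hv2 => h v (htr2sub P v hv1) (htr2sub Q v hv2))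
  have hL1'once : ∀ P ∈ L1', ∀ v ∈ P.walk.support, v ∈ S → v = P.b := by
    intro P hP
    obtain ⟨P0, -, rfl⟩ := List.mem_map.mp hP
    exact htr1once P0
  have hL2'once : ∀ Q ∈ L2', ∀ v ∈ Q.walk.support, v ∈ S → v = Q.a := by
    intro Q hQ
    obtain ⟨Q0, -, rfl⟩ := List.mem_map.mp hQ
    exact htr2once Q0
  -- region facts
  have hreg1 : ∀ P : PB (restrict G (sideOf G A S ∪ S)) A S,
      ∀ v ∈ P.walk.support, v ∈ sideOf G A S ∪ S := by
    intro P v hv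
    rcases walk_support_mem P.walk v hv with rfl | h
    · exact Or.inl (subset_sideOf P.ha)
    · exact h
  have hreg2 : ∀ Q : PB (restrict G (sideOf G B S ∪ S)) S B,
      ∀ v ∈ Q.walk.support, v ∈ sideOf G B S ∪ S := by
    intro Q v hv
    rcases walk_support_mem Q.walk v hv with rfl | h
    · exact Or.inr Q.ha
    · exact h
  -- the starts of `L2'` cover `S`
  have hcov : ∀ s ∈ S, ∃ Q ∈ L2', Q.a = s := by
    intro s hs
    have hlnodup : (L2'.map (fun Q => Q.a)).Nodup := by
      rw [List.Nodup, List.pairwise_map]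
      refine hL2'pw.imp ?_
      intro Q Q' h hQa
      exact h Q.a Q.walk.start_mem_support
        (by rw [show Q.a = Q'.a from hQa]; exact Q'.walk.start_mem_support)
    have hSf : S.Finite := S.toFinite
    have hsub : (L2'.map (fun Q => Q.a)).toFinset ⊆ hSf.toFinset := by
      intro x hx
      rw [List.mem_toFinset, List.mem_map] at hx
      obtain ⟨Q, -, rfl⟩ := hx
      exact hSf.mem_toFinset.mpr Q.ha
    have hcards : hSf.toFinset.card ≤ (L2'.map (fun Q => Q.a)).toFinset.card := by
      rw [List.toFinset_card_of_nodup hlnodup]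
      simp only [List.length_map]
      rw [hL2', List.length_map, hL2len]
      rw [← Set.ncard_eq_toFinset_card S hSf, hScard]
    have heq := Finset.eq_of_subset_of_card_le hsub hcards
    have : s ∈ (L2'.map (fun Q => Q.a)).toFinset := by
      rw [heq]; exact hSf.mem_toFinset.mpr hs
    rw [List.mem_toFinset, List.mem_map] at this
    obtain ⟨Q, hQ, hQa⟩ := this
    exact ⟨Q, hQ, hQa⟩
  -- match each trimmed A-side path with the B-side path starting at its endpoint
  have hmatch : ∀ P : {P // P ∈ L1'}, ∃ Q, Q ∈ L2' ∧ Q.a = P.1.b :=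
    fun P => hcov P.1.b P.1.hb
  choose qOf hqmem hqa using hmatch
  -- glue
  have hbne : ∀ P P' : {P // P ∈ L1'}, PDisj P.1 P'.1 → P.1.b ≠ P'.1.b := by
    intro P P' hd heq
    exact hd P.1.b P.1.walk.end_mem_support
      (by rw [heq]; exact P'.1.walk.end_mem_support)
  have hjunction : ∀ P : {P // P ∈ L1'}, ∀ x, x ∈ P.1.walk.support →
      x ∈ (qOf P).walk.support → x = P.1.b := by
    intro P x hx1 hx2
    by_cases hxS : x ∈ S
    · exact hL1'once P.1 P.2 x hx1 hxS
    · rcases hreg1 P.1 x hx1 with h1 | h1; swap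
      · exact absurd h1 hxS
      rcases hreg2 (qOf P) x hx2 with h2 | h2; swap
      · exact absurd h2 hxS
      exact absurd (sides_disjoint hsep hAB h1 h2) not_false
  let R : {P // P ∈ L1'} → PB G A B := fun P =>
    ⟨P.1.a, (qOf P).b,
      (upWalk P.1.walk).append ((upWalk (qOf P).walk).copy (hqa P) rfl),
      P.1.ha, (qOf P).hb, by
        refine isPath_append (upWalk_isPath P.1.path) ?_ ?_
        · rw [SimpleGraph.Walk.isPath_copy]
          exact upWalk_isPath (qOf P).path
        · intro x hx1 hx2
          rw [SimpleGraph.Walk.support_copy, upWalk_support] at hx2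
          rw [upWalk_support] at hx1
          exact hjunction P x hx1 hx2⟩
  have hRsupp : ∀ P : {P // P ∈ L1'}, ∀ v, v ∈ (R P).walk.support →
      v ∈ P.1.walk.support ∨ v ∈ (qOf P).walk.support := by
    intro P v hv
    rcases mem_support_append hv with h | h
    · rw [upWalk_support] at h; exact Or.inl h
    · rw [SimpleGraph.Walk.support_copy, upWalk_support] at h; exact Or.inr h
  refine mengerFam_mono (m := m) ?_ hk
  refine ⟨L1'.attach.map R, ?_, ?_⟩
  · rw [List.length_map, List.length_attach, hL1', List.length_map, hL1len]
  · rw [List.pairwise_map]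
    have hpw : L1'.attach.Pairwise (fun P P' => PDisj P.1 P'.1) := by
      have h1 : (L1'.attach.map Subtype.val).Pairwise PDisj := by
        rw [List.attach_map_subtype_val]; exact hL1'pw
      rw [List.pairwise_map] at h1
      exact h1
    refine hpw.imp ?_
    intro P P' hd v hv1 hv2
    have hbne' := hbne P P' hd
    have hQne : qOf P ≠ qOf P' := by
      intro h
      exact hbne' ((hqa P).symm.trans (h ▸ hqa P'))
    have hcross : ∀ (X : {P // P ∈ L1'}) (Y : {P // P ∈ L1'}), X.1.b ≠ Y.1.b →
        v ∈ X.1.walk.support → v ∈ (qOf Y).walk.support → False := by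
      intro X Y hne hx hy
      by_cases hvS : v ∈ S
      · have h1 := hL1'once X.1 X.2 v hx hvS
        have h2 := hL2'once (qOf Y) (hqmem Y) v hy hvS
        rw [hqa Y] at h2
        exact hne (h1 ▸ h2 ▸ rfl)
      · rcases hreg1 X.1 v hx with h1 | h1; swap
        · exact absurd h1 hvS
        rcases hreg2 (qOf Y) v hy with h2 | h2; swap
        · exact absurd h2 hvS
        exact sides_disjoint hsep hAB h1 h2
    rcases hRsupp P v hv1 with h1 | h1 <;> rcases hRsupp P' v hv2 with h2 | h2
    · exact hd v h1 h2
    · exact hcross P P' hbne' h1 h2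
    · exact hcross P' P (Ne.symm hbne') h2 h1
    · exact pairwise_pdisj_forall hL2'pw (hqmem P) (hqmem P') hQne v h1 h2

/-! ### Separator transfers for edge deletion -/

lemma sep_insert_endpoint {G : SimpleGraph V} {A B T : Set V} {x y : V} (hxy : G.Adj x y)
    (hT : Sep (G.deleteEdges {s(x, y)}) A B T) : Sep G A B (insert x T) := by
  intro a b ha hb p
  by_cases hin : s(x, y) ∈ p.edges
  · exact ⟨x, Set.mem_insert _ _, p.fst_mem_support_of_mem_edges hin⟩
  · have hpe : ∀ e' ∈ p.edges, e' ∈ (G.deleteEdges {s(x, y)}).edgeSet := by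
      intro e' he'
      rw [SimpleGraph.edgeSet_deleteEdges]
      exact ⟨p.edges_subset_edgeSet he', by rintro rfl; exact hin he'⟩
    obtain ⟨t, ht, htp⟩ := hT ha hb (p.transfer _ hpe)
    rw [SimpleGraph.Walk.support_transfer] at htp
    exact ⟨t, Set.mem_insert_of_mem _ ht, htp⟩

lemma sep_of_deleteEdges_mem {G : SimpleGraph V} {A B T : Set V} {x y : V} (hxT : x ∈ T)
    (hT : Sep (G.deleteEdges {s(x, y)}) A B T) : Sep G A B T := by
  intro a b ha hb p
  by_cases hin : s(x, y) ∈ p.edges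
  · exact ⟨x, hxT, p.fst_mem_support_of_mem_edges hin⟩
  · have hpe : ∀ e' ∈ p.edges, e' ∈ (G.deleteEdges {s(x, y)}).edgeSet := by
      intro e' he'
      rw [SimpleGraph.edgeSet_deleteEdges]
      exact ⟨p.edges_subset_edgeSet he', by rintro rfl; exact hin he'⟩
    obtain ⟨t, ht, htp⟩ := hT ha hb (p.transfer _ hpe)
    rw [SimpleGraph.Walk.support_transfer] at htp
    exact ⟨t, ht, htp⟩

/-! ### The trichotomy for a minimum separator -/

lemma min_sep_trichotomy {G : SimpleGraph V} {A B U : Set V} {k m : ℕ}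
    (hAB : A ∩ B = ∅)
    (hAedge : ∀ a ∈ A, ∃ c, G.Adj a c) (hBedge : ∀ b ∈ B, ∃ c, G.Adj b c)
    (hmin : ∀ T, Sep G A B T → m ≤ T.ncard)
    (hU : Sep G A B U) (hUm : U.ncard = m) (hk : k ≤ m)
    (ih : ∀ (G' : SimpleGraph V) (A' B' : Set V) (k' : ℕ), mu G' A' B' < mu G A B →
      (∀ T, Sep G' A' B' T → k' ≤ T.ncard) → MengerFam G' A' B' k') :
    MengerFam G A B k ∨ U = A ∨ U = B := by
  by_cases hEA : (restrict G (sideOf G A U ∪ U)).edgeSet.ncard < G.edgeSet.ncard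
  · by_cases hEB : (restrict G (sideOf G B U ∪ U)).edgeSet.ncard < G.edgeSet.ncard
    · exact Or.inl (split_case hAB hU hUm hmin hk ih hEA hEB)
    · -- the B-side contains all edges, so A ⊆ U
      right; left
      have hEq : (restrict G (sideOf G B U ∪ U)).edgeSet = G.edgeSet :=
        Set.eq_of_subset_of_ncard_le (SimpleGraph.edgeSet_mono restrict_le)
          (le_of_not_gt hEB) (G.edgeSet.toFinite)
      have hAU : A ⊆ U := by
        intro a ha
        obtain ⟨c, hc⟩ := hAedge a ha
        have hmem : s(a, c) ∈ (restrict G (sideOf G B U ∪ U)).edgeSet := by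
          rw [hEq]; exact (SimpleGraph.mem_edgeSet G).mpr hc
        have hadj : (restrict G (sideOf G B U ∪ U)).Adj a c :=
          (SimpleGraph.mem_edgeSet _).mp hmem
        rcases hadj.2.1 with h | h
        · obtain ⟨b, hbB, hr⟩ := h
          exact absurd hr (no_avoiding_reach (sep_comm hU)
            (by rw [Set.inter_comm]; exact hAB) hbB ha)
        · exact h
      have hAsep : Sep G A B A := fun a b ha _ p => ⟨a, ha, p.start_mem_support⟩
      exact (Set.eq_of_subset_of_ncard_le hAU
        (by rw [hUm]; exact hmin A hAsep) (U.toFinite)).symm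
  · -- the A-side contains all edges, so B ⊆ U
    right; right
    have hEq : (restrict G (sideOf G A U ∪ U)).edgeSet = G.edgeSet :=
      Set.eq_of_subset_of_ncard_le (SimpleGraph.edgeSet_mono restrict_le)
        (le_of_not_gt hEA) (G.edgeSet.toFinite)
    have hBU : B ⊆ U := by
      intro b hb
      obtain ⟨c, hc⟩ := hBedge b hb
      have hmem : s(b, c) ∈ (restrict G (sideOf G A U ∪ U)).edgeSet := by
        rw [hEq]; exact (SimpleGraph.mem_edgeSet G).mpr hc
      have hadj : (restrict G (sideOf G A U ∪ U)).Adj b c :=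
        (SimpleGraph.mem_edgeSet _).mp hmem
      rcases hadj.2.1 with h | h
      · obtain ⟨a, haA, hr⟩ := h
        exact absurd hr (no_avoiding_reach hU hAB haA hb)
      · exact h
    have hBsep : Sep G A B B := fun a b _ hb p => ⟨b, hb, p.end_mem_support⟩
    exact (Set.eq_of_subset_of_ncard_le hBU
      (by rw [hUm]; exact hmin B hBsep) (U.toFinite)).symm

/-! ### The core case: `B` itself is a minimum separator -/

lemma coreB {G : SimpleGraph V} {A B : Set V} {k m : ℕ}
    (hAB : A ∩ B = ∅)
    (hAedge : ∀ a ∈ A, ∃ c, G.Adj a c) (hBedge : ∀ b ∈ B, ∃ c, G.Adj b c)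
    (hmin : ∀ T, Sep G A B T → m ≤ T.ncard)
    (hBm : B.ncard = m) (hk : k ≤ m) (hk1 : 1 ≤ k)
    (ih : ∀ (G' : SimpleGraph V) (A' B' : Set V) (k' : ℕ), mu G' A' B' < mu G A B →
      (∀ T, Sep G' A' B' T → k' ≤ T.ncard) → MengerFam G' A' B' k') :
    MengerFam G A B k := by
  classical
  have hm1 : 1 ≤ m := le_trans hk1 hk
  obtain ⟨b, hb⟩ : B.Nonempty := Set.nonempty_of_ncard_ne_zero (by omega)
  obtain ⟨c, hbc⟩ := hBedge b hb
  have he : s(b, c) ∈ G.edgeSet := (SimpleGraph.mem_edgeSet G).mpr hbc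
  by_cases hrec : ∀ T, Sep (G.deleteEdges {s(b, c)}) A B T → m ≤ T.ncard
  · have hmu : mu (G.deleteEdges {s(b, c)}) A B < mu G A B := by
      apply mu_lt_of_edges_lt
      rw [SimpleGraph.edgeSet_deleteEdges]
      exact Set.ncard_diff_singleton_lt_of_mem he (G.edgeSet.toFinite)
    obtain ⟨L, hLl, hLp⟩ := ih _ A B m hmu hrec
    refine mengerFam_mono (m := m) ?_ hk
    refine ⟨L.map (fun P => P.lift (fun e' he' =>
      SimpleGraph.edgeSet_mono (SimpleGraph.deleteEdges_le _)
        (P.walk.edges_subset_edgeSet he')) P.ha P.hb), by simp [hLl], ?_⟩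
    rw [List.pairwise_map]
    refine hLp.imp ?_
    intro P Q h v hv1 hv2
    rw [PB.lift_support] at hv1 hv2
    exact h v hv1 hv2
  · push_neg at hrec
    obtain ⟨T, hT, hTm⟩ := hrec
    have hTb : Sep G A B (insert b T) := sep_insert_endpoint hbc hT
    have hTc : Sep G A B (insert c T) := by
      apply sep_insert_endpoint hbc.symm
      rwa [show s(c, b) = s(b, c) from Sym2.eq_swap]
    have hbT : b ∉ T := by
      intro hbT
      exact absurd (hmin T (sep_of_deleteEdges_mem hbT hT)) (by omega)
    have hcT : c ∉ T := by
      intro hcT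
      have : Sep G A B T := by
        apply sep_of_deleteEdges_mem (x := c) (y := b) hcT
        rwa [show s(c, b) = s(b, c) from Sym2.eq_swap]
      exact absurd (hmin T this) (by omega)
    have hTbcard : (insert b T).ncard = T.ncard + 1 := Set.ncard_insert_of_notMem hbT (T.toFinite)
    have hTccard : (insert c T).ncard = T.ncard + 1 := Set.ncard_insert_of_notMem hcT (T.toFinite)
    have hTcard : T.ncard + 1 = m := by
      have h1 : m ≤ (insert b T).ncard := hmin _ hTb
      omega
    rcases min_sep_trichotomy hAB hAedge hBedge hmin hTb (by omega) hk ih with hdone | hUA | hUB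
    · exact hdone
    · -- insert b T = A is impossible
      exfalso
      have hbA : b ∈ A := hUA ▸ Set.mem_insert b T
      have : b ∈ A ∩ B := ⟨hbA, hb⟩
      rw [hAB] at this
      exact this
    · -- insert b T = B, so T = B \ {b}
      have hTeq : T = B \ {b} := by
        apply Set.eq_of_subset_of_ncard_le
        · intro x hx
          refine ⟨hUB ▸ Set.mem_insert_of_mem b hx, ?_⟩
          intro hxb
          rw [Set.mem_singleton_iff] at hxb
          exact hbT (hxb ▸ hx)
        · rw [Set.ncard_diff_singleton_of_mem hb, hBm]
          omega
        · exact (B \ {b}).toFinite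
      rcases min_sep_trichotomy hAB hAedge hBedge hmin hTc (by omega) hk ih with hdone | hWA | hWB
      · exact hdone
      · -- insert c T = A, so B \ {b} ⊆ A ∩ B = ∅ and everything degenerates
        have hBdiff : B \ {b} = ∅ := by
          rw [Set.eq_empty_iff_forall_notMem]
          intro x hx
          have hxA : x ∈ A := hWA ▸ Set.mem_insert_of_mem c (hTeq ▸ hx)
          have : x ∈ A ∩ B := ⟨hxA, hx.1⟩
          rw [hAB] at this
          exact this
        have hBb : B = {b} := by
          ext x
          constructor
          · intro hx
            by_contra hxb
            exact (Set.eq_empty_iff_forall_notMem.mp hBdiff) x ⟨hx, hxb⟩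
          · rintro rfl
            exact hb
        have hTempty : T = ∅ := by rw [hTeq, hBdiff]
        have hAc : A = {c} := by rw [← hWA, hTempty]; simp
        have hcA : c ∈ A := by rw [hAc]; exact rfl
        have hk1' : k = 1 := by
          have : m = 1 := by rw [← hBm, hBb]; simp
          omega
        subst hk1'
        refine ⟨[⟨c, b, SimpleGraph.Walk.cons hbc.symm SimpleGraph.Walk.nil, hcA, hb, ?_⟩],
          rfl, List.pairwise_singleton _ _⟩
        rw [SimpleGraph.Walk.cons_isPath_iff]
        exact ⟨SimpleGraph.Walk.IsPath.nil, by simp [hbc.ne']⟩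
      · -- insert c T = B is impossible
        exfalso
        have hbmem : b ∈ insert c T := hWB ▸ hb
        rcases Set.mem_insert_iff.mp hbmem with h | h
        · exact hbc.ne h
        · exact hbT h

/-! ### Menger's theorem -/

theorem mengerAux : ∀ (N : ℕ) (G : SimpleGraph V) (A B : Set V) (k : ℕ),
    mu G A B ≤ N → (∀ T, Sep G A B T → k ≤ T.ncard) → MengerFam G A B k := by
  intro N
  induction N using Nat.strong_induction_on with
  | _ N ihN =>
  intro G A B k hN hyp
  have ih : ∀ (G' : SimpleGraph V) (A' B' : Set V) (k' : ℕ), mu G' A' B' < mu G A B →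
      (∀ T, Sep G' A' B' T → k' ≤ T.ncard) → MengerFam G' A' B' k' := by
    intro G' A' B' k' hlt hyp'
    exact ihN (mu G' A' B') (lt_of_lt_of_le hlt hN) G' A' B' k' le_rfl hyp'
  clear ihN hN
  rcases Nat.eq_zero_or_pos k with rfl | hk1
  · exact ⟨[], rfl, List.Pairwise.nil⟩
  by_cases hAB : A ∩ B = ∅
  swap
  · -- cleanup 1 : a common vertex gives a trivial path
    obtain ⟨a, ha⟩ := Set.nonempty_iff_ne_empty.mpr hAB
    have hyp' : ∀ T, Sep (restrict G {a}ᶜ) (A \ {a}) (B \ {a}) T → k - 1 ≤ T.ncard := by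
      intro T hT
      have hsep : Sep G A B (insert a T) := by
        intro a' b' ha' hb' p
        by_cases hmem : a ∈ p.support
        · exact ⟨a, Set.mem_insert _ _, hmem⟩
        · have hsupp : ∀ v ∈ p.support, v ∈ ({a}ᶜ : Set V) := by
            intro v hv hva
            rw [Set.mem_singleton_iff] at hva
            exact hmem (hva ▸ hv)
          obtain ⟨q, hq⟩ := downWalk p hsupp
          have ha'ne : a' ≠ a := fun h => hmem (h ▸ p.start_mem_support)
          have hb'ne : b' ≠ a := fun h => hmem (h ▸ p.end_mem_support)
          obtain ⟨t, ht, htq⟩ := hT ⟨ha', by simpa using ha'ne⟩ ⟨hb', by simpa using hb'ne⟩ q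
          rw [hq] at htq
          exact ⟨t, Set.mem_insert_of_mem _ ht, htq⟩
      have h1 := hyp _ hsep
      have h2 := Set.ncard_insert_le a T
      omega
    obtain ⟨L, hLl, hLp⟩ := ih _ _ _ (k - 1) (mu_cleanup1 ha) hyp'
    have hanot : ∀ P : PB (restrict G {a}ᶜ) (A \ {a}) (B \ {a}), a ∉ P.walk.support := by
      intro P hmem
      rcases walk_support_mem P.walk a hmem with h | h
      · exact P.ha.2 (Set.mem_singleton_iff.mpr h.symm)
      · exact h rfl
    let lift : PB (restrict G {a}ᶜ) (A \ {a}) (B \ {a}) → PB G A B := fun P =>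
      ⟨P.a, P.b, upWalk P.walk, P.ha.1, P.hb.1, upWalk_isPath P.path⟩
    have hliftsupp : ∀ P, (lift P).walk.support = P.walk.support := fun P => upWalk_support _
    refine ⟨(⟨a, a, SimpleGraph.Walk.nil, ha.1, ha.2, SimpleGraph.Walk.IsPath.nil⟩ : PB G A B)
      :: L.map lift, by simp [hLl]; omega, ?_⟩
    constructor
    · intro P hP v hv1 hv2
      simp only [SimpleGraph.Walk.support_nil, List.mem_singleton] at hv1
      subst hv1
      obtain ⟨P0, -, rfl⟩ := List.mem_map.mp hP
      rw [hliftsupp] at hv2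
      exact hanot P0 hv2
    · rw [List.pairwise_map]
      refine hLp.imp ?_
      intro P Q h v hv1 hv2
      rw [hliftsupp] at hv1 hv2
      exact h v hv1 hv2
  -- cleanup 2a : vertices of `A` with no edges are useless
  by_cases hAedge : ∀ a ∈ A, ∃ c, G.Adj a c
  swap
  · push_neg at hAedge
    obtain ⟨a, ha, hnoedge⟩ := hAedge
    have hyp' : ∀ T, Sep G (A \ {a}) B T → k ≤ T.ncard := by
      intro T hT
      apply hyp
      intro a' b' ha' hb' p
      rcases eq_or_ne a' a with rfl | hne
      · cases p with
        | nil => exact absurd (Set.mem_inter ha' (by exact hb')) (by simp [hAB])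
        | cons hadj _ => exact absurd hadj (hnoedge _)
      · exact hT ⟨ha', by simpa using hne⟩ hb' p
    obtain ⟨L, hLl, hLp⟩ := ih _ _ _ k (mu_cleanup2 ha hAB) hyp'
    refine ⟨L.map (fun P => ⟨P.a, P.b, P.walk, P.ha.1, P.hb, P.path⟩), by simp [hLl], ?_⟩
    rw [List.pairwise_map]
    exact hLp.imp (fun {P Q} h => h)
  -- cleanup 2b : vertices of `B` with no edges are useless
  by_cases hBedge : ∀ b ∈ B, ∃ c, G.Adj b c
  swap
  · push_neg at hBedge
    obtain ⟨b, hb, hnoedge⟩ := hBedge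
    have hyp' : ∀ T, Sep G A (B \ {b}) T → k ≤ T.ncard := by
      intro T hT
      apply hyp
      intro a' b' ha' hb' p
      rcases eq_or_ne b' b with rfl | hne
      · cases hrev : p.reverse with
        | nil =>
            exfalso
            have : p = SimpleGraph.Walk.nil.reverse := by
              rw [← hrev, SimpleGraph.Walk.reverse_reverse]
            rw [SimpleGraph.Walk.reverse_nil] at this
            subst this
            exact absurd (Set.mem_inter ha' hb') (by simp [hAB])
        | cons hadj _ => exact absurd hadj (hnoedge _)
      · exact hT ha' ⟨hb', by simpa using hne⟩ p
    have hmu : mu G A (B \ {b}) < mu G A B := by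
      rw [mu_comm G A (B \ {b}), mu_comm G A B]
      exact mu_cleanup2 hb (by rw [Set.inter_comm]; exact hAB)
    obtain ⟨L, hLl, hLp⟩ := ih _ _ _ k hmu hyp'
    refine ⟨L.map (fun P => ⟨P.a, P.b, P.walk, P.ha, P.hb.1, P.path⟩), by simp [hLl], ?_⟩
    rw [List.pairwise_map]
    exact hLp.imp (fun {P Q} h => h)
  -- main case : take a minimum separator
  have hne : {n | ∃ Sx : Set V, Sep G A B Sx ∧ Sx.ncard = n}.Nonempty :=
    ⟨(Set.univ : Set V).ncard, Set.univ, sep_univ G A B, rfl⟩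
  obtain ⟨S, hSsep, hSm⟩ := Nat.sInf_mem hne
  have hmin : ∀ T, Sep G A B T →
      sInf {n | ∃ Sx : Set V, Sep G A B Sx ∧ Sx.ncard = n} ≤ T.ncard :=
    fun T hT => Nat.sInf_le ⟨T, hT, rfl⟩
  set m := sInf {n | ∃ Sx : Set V, Sep G A B Sx ∧ Sx.ncard = n} with hm
  have hk : k ≤ m := by
    have := hyp S hSsep
    omega
  rcases min_sep_trichotomy hAB hAedge hBedge hmin hSsep hSm hk ih with hdone | hSA | hSB
  · exact hdone
  · -- S = A : apply the core case to the flipped problem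
    apply mengerFam_comm
    have ih' : ∀ (G' : SimpleGraph V) (A' B' : Set V) (k' : ℕ), mu G' A' B' < mu G B A →
        (∀ T, Sep G' A' B' T → k' ≤ T.ncard) → MengerFam G' A' B' k' := by
      rw [mu_comm G B A]
      exact ih
    refine coreB (m := m) (by rw [Set.inter_comm]; exact hAB) hBedge hAedge
      (fun T hT => hmin T (sep_comm hT)) ?_ hk hk1 ih'
    rw [← hSA]
    exact hSm
  · exact coreB hAB hAedge hBedge hmin (by rw [← hSB]; exact hSm) hk hk1 ih

/-- Contrapositive form of Menger: no `k` disjoint `A`–`B` paths gives a small separator. -/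
theorem small_separator_of_no_fam {G : SimpleGraph V} {A B : Set V} {k : ℕ}
    (h : ¬ MengerFam G A B k) : ∃ S : Set V, Sep G A B S ∧ S.ncard < k := by
  by_contra h'
  push_neg at h'
  exact h (mengerAux (mu G A B) G A B k le_rfl (fun T hT => h' T hT))

/-! ### Consequences of biconnectivity -/

omit [Fintype V] in
lemma closed_path_nil {G : SimpleGraph V} {w : V} {p : G.Walk w w} (hp : p.IsPath) :
    p = SimpleGraph.Walk.nil := by
  cases p with
  | nil => rfl
  | cons h q =>
      rw [SimpleGraph.Walk.cons_isPath_iff] at hp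
      exact absurd q.end_mem_support hp.2

omit [Fintype V] in
lemma two_neighbors {G : SimpleGraph V} (hbi : Biconnected G) {v w : V} (hvw : v ≠ w) :
    ∃ c d, c ≠ d ∧ G.Adj v c ∧ G.Adj v d := by
  obtain ⟨p, q, hp, hq, hpq, hid⟩ := hbi v w hvw
  cases p with
  | nil => exact absurd rfl hvw
  | cons hp0 p' =>
    cases q with
    | nil => exact absurd rfl hvw
    | cons hq0 q' =>
      rename_i c d
      refine ⟨c, d, ?_, hp0, hq0⟩
      rintro rfl
      have hcp : c ∈ (SimpleGraph.Walk.cons hp0 p').support := by simp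
      have hcq : c ∈ (SimpleGraph.Walk.cons hq0 q').support := by simp
      rcases hid c hcp hcq with rfl | rfl
      · exact hp0.ne rfl
      · rw [SimpleGraph.Walk.cons_isPath_iff] at hp hq
        have hp' := closed_path_nil hp.1
        have hq' := closed_path_nil hq.1
        subst hp' hq'
        exact hpq rfl

lemma deg_ge_two {G : SimpleGraph V} (hbi : Biconnected G) {v w : V} (hvw : v ≠ w) :
    2 ≤ deg G v := by
  obtain ⟨c, d, hcd, hc, hd⟩ := two_neighbors hbi hvw
  have hsub : ({c, d} : Set V) ⊆ G.neighborSet v := by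
    intro x hx
    rcases hx with rfl | hx
    · exact hc
    · rw [Set.mem_singleton_iff] at hx; subst hx; exact hd
  calc 2 = ({c, d} : Set V).ncard := (Set.ncard_pair hcd).symm
    _ ≤ (G.neighborSet v).ncard := Set.ncard_le_ncard hsub ((G.neighborSet v).toFinite)

/-! ### Extraction of the middle of a path -/

omit [Fintype V] in
lemma middle_extract {H : SimpleGraph V} {u w : V} (p : H.Walk u w) (hp : p.IsPath)
    (hnadj : ¬ H.Adj u w) (hne : u ≠ w) :
    ∃ (c d : V) (M : H.Walk c d), H.Adj u c ∧ H.Adj d w ∧ M.IsPath ∧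
      (∀ v ∈ M.support, v ∈ p.support) ∧ u ∉ M.support ∧ w ∉ M.support := by
  cases p with
  | nil => exact absurd rfl hne
  | cons h1 q1 =>
    rename_i c
    rw [SimpleGraph.Walk.cons_isPath_iff] at hp
    have hq1path : q1.reverse.IsPath := hp.1.reverse
    cases hq : q1.reverse with
    | nil =>
        exfalso
        have : q1 = SimpleGraph.Walk.nil := by
          have := congrArg SimpleGraph.Walk.reverse hq
          rwa [SimpleGraph.Walk.reverse_reverse, SimpleGraph.Walk.reverse_nil] at this
        subst this
        exact hnadj h1
    | cons h2 r2 =>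
        rw [hq, SimpleGraph.Walk.cons_isPath_iff] at hq1path
        refine ⟨c, _, r2.reverse, h1, h2.symm, hq1path.1.reverse, ?_, ?_, ?_⟩
        · intro v hv
          rw [SimpleGraph.Walk.support_reverse, List.mem_reverse] at hv
          have : v ∈ q1.reverse.support := by rw [hq]; simp [hv]
          rw [SimpleGraph.Walk.support_reverse, List.mem_reverse] at this
          simp [this]
        · intro hmem
          rw [SimpleGraph.Walk.support_reverse, List.mem_reverse] at hmem
          have : u ∈ q1.reverse.support := by rw [hq]; simp [hmem]
          rw [SimpleGraph.Walk.support_reverse, List.mem_reverse] at this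
          exact hp.2 this
        · intro hmem
          rw [SimpleGraph.Walk.support_reverse, List.mem_reverse] at hmem
          exact hq1path.2 hmem

/-! ### The counting argument -/

lemma counting {G : SimpleGraph V} (hbi : Biconnected G) {x y a b : V}
    (hxy : x ≠ y) (ha : a ∉ ({x, y} : Set V)) (hb : b ∉ ({x, y} : Set V))
    (hsep : ¬ reachIn G (Set.univ \ {x, y}) a b) :
    ∀ c : V, c ∉ ({x, y} : Set V) →
      ({e ∈ G.edgeSet | ∃ w, w ∈ e ∧ reachIn G (Set.univ \ {x, y}) c w}).ncard + 1
        < G.edgeSet.ncard := by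
  intro c hc
  -- find a vertex `d` not reachable from `c`
  obtain ⟨d, hd, hnr⟩ : ∃ d, d ∉ ({x, y} : Set V) ∧ ¬ reachIn G (Set.univ \ {x, y}) c d := by
    by_cases hca : reachIn G (Set.univ \ {x, y}) c a
    · refine ⟨b, hb, fun hcb => hsep (reachIn_trans (reachIn_symm hca) hcb)⟩
    · exact ⟨a, ha, hca⟩
  have hdx : d ≠ x := fun h => hd (by simp [h])
  obtain ⟨n₁, n₂, hn12, hdn₁, hdn₂⟩ := two_neighbors hbi hdx
  have hedge : ∀ n : V, G.Adj d n →
      s(d, n) ∉ {e ∈ G.edgeSet | ∃ w, w ∈ e ∧ reachIn G (Set.univ \ {x, y}) c w} := by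
    intro n hdn hmem
    obtain ⟨-, w', hw', hrw⟩ := hmem
    rcases Sym2.mem_iff.mp hw' with rfl | rfl
    · exact hnr hrw
    · by_cases hnS : w' ∈ (Set.univ \ {x, y} : Set V)
      · refine hnr (Relation.ReflTransGen.tail hrw ⟨hdn.symm, hnS, ?_⟩)
        simp only [Set.mem_diff, Set.mem_univ, true_and]
        exact fun h => hd h
      · have hcw : c ≠ w' := by
          rintro rfl
          exact hnS (by simp only [Set.mem_diff, Set.mem_univ, true_and]; exact hc)
        exact hnS (reachIn_mem_right hrw hcw)
  have hne12 : s(d, n₁) ≠ s(d, n₂) := by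
    intro h
    rcases Sym2.eq_iff.mp h with ⟨-, h2⟩ | ⟨h1, -⟩
    · exact hn12 h2
    · exact hdn₂.ne' h1.symm
  have hsub : {e ∈ G.edgeSet | ∃ w, w ∈ e ∧ reachIn G (Set.univ \ {x, y}) c w} ⊆
      G.edgeSet \ {s(d, n₁), s(d, n₂)} := by
    intro e he
    refine ⟨he.1, ?_⟩
    rintro (rfl | h)
    · exact hedge n₁ hdn₁ he
    · rw [Set.mem_singleton_iff] at h
      subst h
      exact hedge n₂ hdn₂ he
  have hpairsub : ({s(d, n₁), s(d, n₂)} : Set (Sym2 V)) ⊆ G.edgeSet := by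
    rintro e (rfl | h)
    · exact (SimpleGraph.mem_edgeSet G).mpr hdn₁
    · rw [Set.mem_singleton_iff] at h; subst h
      exact (SimpleGraph.mem_edgeSet G).mpr hdn₂
  have hdiff : (G.edgeSet \ {s(d, n₁), s(d, n₂)}).ncard = G.edgeSet.ncard - 2 := by
    rw [Set.ncard_diff hpairsub (Set.toFinite _), Set.ncard_pair hne12]
  have h2le : 2 ≤ G.edgeSet.ncard := by
    calc 2 = ({s(d, n₁), s(d, n₂)} : Set (Sym2 V)).ncard := (Set.ncard_pair hne12).symm
      _ ≤ G.edgeSet.ncard := Set.ncard_le_ncard hpairsub (G.edgeSet.toFinite)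
  have hle := Set.ncard_le_ncard hsub ((G.edgeSet \ {s(d, n₁), s(d, n₂)}).toFinite)
  omega

/-! ### Building `u`–`w` paths from families in the restricted graph -/

omit [Fintype V] in
lemma mk_uw_path {K : SimpleGraph V} {u w : V} (hnadj : ¬ K.Adj u w) (hne : u ≠ w)
    (P : PB (restrict K ({u, w}ᶜ : Set V)) (K.neighborSet u) (K.neighborSet w)) :
    ∃ W : K.Walk u w, W.IsPath ∧
      (∀ v, v ∈ W.support ↔ (v = u ∨ v = w ∨ v ∈ P.walk.support)) := by
  have hPa : P.a ≠ u ∧ P.a ≠ w := by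
    constructor
    · exact fun h => (P.ha : K.Adj u P.a).ne (h.symm)
    · intro h; exact hnadj (h ▸ P.ha)
  have hreg : ∀ v ∈ P.walk.support, v ∉ ({u, w} : Set V) := by
    intro v hv
    rcases walk_support_mem P.walk v hv with rfl | h
    · rintro (h | h)
      · exact hPa.1 h
      · rw [Set.mem_singleton_iff] at h; exact hPa.2 h
    · exact h
  have hu : u ∉ P.walk.support := fun h => hreg u h (by simp)
  have hw : w ∉ P.walk.support := fun h => hreg w h (by simp)
  have hbw : K.Adj P.b w := (P.hb : K.Adj w P.b).symm
  refine ⟨SimpleGraph.Walk.cons ((K.mem_neighborSet u P.a).mp P.ha) ((upWalk P.walk).concat hbw), ?_, ?_⟩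
  · rw [SimpleGraph.Walk.cons_isPath_iff]
    constructor
    · rw [SimpleGraph.Walk.isPath_def, SimpleGraph.Walk.support_concat, upWalk_support,
        List.nodup_append]
      refine ⟨?_, by simp, ?_⟩
      · have := upWalk_isPath P.path
        rw [SimpleGraph.Walk.isPath_def, upWalk_support] at this
        exact this
      intro x hx y hxw hxy
      simp only [List.mem_singleton] at hxw
      subst hxw hxy
      exact hw hx
    · rw [SimpleGraph.Walk.support_concat, upWalk_support]
      intro hmem
      rcases List.mem_append.mp hmem with h | h
      · exact hu h
      · simp only [List.mem_singleton] at h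
        exact hne h
  · intro v
    simp only [SimpleGraph.Walk.support_cons, List.mem_cons,
      SimpleGraph.Walk.support_concat, upWalk_support, List.concat_eq_append,
      List.mem_append, List.mem_singleton]
    tauto

omit [Fintype V] in
lemma triple_of_three {K : SimpleGraph V} {u w : V} (hnadj : ¬ K.Adj u w) (hne : u ≠ w)
    {P Q R : PB (restrict K ({u, w}ᶜ : Set V)) (K.neighborSet u) (K.neighborSet w)}
    (hPQ : PDisj P Q) (hPR : PDisj P R) (hQR : PDisj Q R) :
    ∃ p q r : K.Walk u w, p.IsPath ∧ q.IsPath ∧ r.IsPath ∧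
      p ≠ q ∧ p ≠ r ∧ q ≠ r ∧
      InternallyDisjoint p q ∧ InternallyDisjoint p r ∧ InternallyDisjoint q r := by
  obtain ⟨Wp, hWp, hWps⟩ := mk_uw_path hnadj hne P
  obtain ⟨Wq, hWq, hWqs⟩ := mk_uw_path hnadj hne Q
  obtain ⟨Wr, hWr, hWrs⟩ := mk_uw_path hnadj hne R
  have hstart : ∀ (X : PB (restrict K ({u, w}ᶜ : Set V)) (K.neighborSet u) (K.neighborSet w)),
      X.a ≠ u ∧ X.a ≠ w := by
    intro X
    constructor
    · exact fun h => (X.ha : K.Adj u X.a).ne h.symm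
    · intro h; exact hnadj (h ▸ X.ha)
  have hdist : ∀ (X Y : PB (restrict K ({u, w}ᶜ : Set V)) (K.neighborSet u) (K.neighborSet w))
      (WX WY : K.Walk u w),
      (∀ v, v ∈ WX.support ↔ (v = u ∨ v = w ∨ v ∈ X.walk.support)) →
      (∀ v, v ∈ WY.support ↔ (v = u ∨ v = w ∨ v ∈ Y.walk.support)) →
      PDisj X Y → WX ≠ WY := by
    intro X Y WX WY hXs hYs hd heq
    have h1 : X.a ∈ WX.support := (hXs X.a).mpr (Or.inr (Or.inr X.walk.start_mem_support))
    rw [heq] at h1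
    rcases (hYs X.a).mp h1 with h | h | h
    · exact (hstart X).1 h
    · exact (hstart X).2 h
    · exact hd X.a X.walk.start_mem_support h
  have hID : ∀ (X Y : PB (restrict K ({u, w}ᶜ : Set V)) (K.neighborSet u) (K.neighborSet w))
      (WX WY : K.Walk u w),
      (∀ v, v ∈ WX.support ↔ (v = u ∨ v = w ∨ v ∈ X.walk.support)) →
      (∀ v, v ∈ WY.support ↔ (v = u ∨ v = w ∨ v ∈ Y.walk.support)) →
      PDisj X Y → InternallyDisjoint WX WY := by
    intro X Y WX WY hXs hYs hd v h1 h2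
    rcases (hXs v).mp h1 with h | h | h
    · exact Or.inl h
    · exact Or.inr h
    rcases (hYs v).mp h2 with h' | h' | h'
    · exact Or.inl h'
    · exact Or.inr h'
    · exact absurd (hd v h h') not_false
  exact ⟨Wp, Wq, Wr, hWp, hWq, hWr,
    hdist P Q Wp Wq hWps hWqs hPQ, hdist P R Wp Wr hWps hWrs hPR,
    hdist Q R Wq Wr hWqs hWrs hQR,
    hID P Q Wp Wq hWps hWqs hPQ, hID P R Wp Wr hWps hWrs hPR,
    hID Q R Wq Wr hWqs hWrs hQR⟩

/-! ### Finding a 2-cut when a non-adjacent pair has no three disjoint paths -/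

lemma cut_of_nonadj {G : SimpleGraph V} (hV : 4 ≤ Fintype.card V)
    {u w : V} (hne : u ≠ w) (hnadj : ¬ G.Adj u w)
    (hbad : ¬ ∃ p q r : G.Walk u w, p.IsPath ∧ q.IsPath ∧ r.IsPath ∧
      p ≠ q ∧ p ≠ r ∧ q ≠ r ∧
      InternallyDisjoint p q ∧ InternallyDisjoint p r ∧ InternallyDisjoint q r) :
    ∃ x y : V, x ≠ y ∧ u ∉ ({x, y} : Set V) ∧ w ∉ ({x, y} : Set V) ∧
      ¬ reachIn G (Set.univ \ {x, y}) u w := by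
  classical
  set G₀ := restrict G ({u, w}ᶜ : Set V) with hG₀
  set A := G.neighborSet u with hA
  set B := G.neighborSet w with hB
  have hnofam : ¬ MengerFam G₀ A B 3 := by
    rintro ⟨L, hLl, hLp⟩
    match L, hLl, hLp with
    | [P, Q, R], _, hLp =>
      rw [List.pairwise_cons] at hLp
      obtain ⟨h1, hLp'⟩ := hLp
      rw [List.pairwise_cons] at hLp'
      obtain ⟨h2, -⟩ := hLp'
      exact hbad (triple_of_three hnadj hne (h1 Q (by simp)) (h1 R (by simp))
        (h2 R (by simp)))
  obtain ⟨S, hSsep, hScard⟩ := small_separator_of_no_fam hnofam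
  -- support of any relevant walk avoids u and w
  have hAu : ∀ a' ∈ A, a' ∉ ({u, w} : Set V) := by
    intro a' ha'
    rintro (h | h)
    · exact (ha' : G.Adj u a').ne h.symm
    · rw [Set.mem_singleton_iff] at h; subst h; exact hnadj ha'
  have havoid : ∀ (a' b' : V), a' ∈ A → b' ∈ B → ∀ p : G₀.Walk a' b',
      ∀ v ∈ p.support, v ∉ ({u, w} : Set V) := by
    intro a' b' ha' _ p v hv
    rcases walk_support_mem p v hv with h | h
    · rw [h]; exact hAu a' ha'
    · exact h
  set S' := S \ {u, w} with hS'
  have hS'sep : Sep G₀ A B S' := by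
    intro a' b' ha' hb' p
    obtain ⟨s, hs, hsp⟩ := hSsep ha' hb' p
    exact ⟨s, ⟨hs, havoid a' b' ha' hb' p s hsp⟩, hsp⟩
  have hS'card : S'.ncard ≤ 2 := by
    rw [hS']
    have := Set.ncard_le_ncard (Set.diff_subset : S \ {u, w} ⊆ S) (S.toFinite)
    omega
  -- pad `S'` to a two-element set avoiding `u, w`
  have hTcard : 2 ≤ ({u, w}ᶜ : Set V).ncard := by
    have h1 : (({u, w} : Set V)).ncard ≤ 2 := by
      have := Set.ncard_insert_le u ({w} : Set V)
      simpa [Set.ncard_singleton] using this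
    have h2 : ({u, w}ᶜ : Set V).ncard = (Set.univ : Set V).ncard - ({u, w} : Set V).ncard := by
      rw [Set.compl_eq_univ_diff]
      exact Set.ncard_diff (Set.subset_univ _) (Set.toFinite _)
    rw [h2, Set.ncard_univ, Nat.card_eq_fintype_card]
    omega
  have hS'T : S' ⊆ ({u, w}ᶜ : Set V) := fun s hs => hs.2
  obtain ⟨U, hSU, hUT, hUcard⟩ := Set.exists_subsuperset_card_eq hS'T hS'card hTcard
  obtain ⟨x, y, hxy, hUxy⟩ := Set.ncard_eq_two.mp hUcard
  subst hUxy
  have hunotin : u ∉ ({x, y} : Set V) := fun h => (hUT h) (by simp)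
  have hwnotin : w ∉ ({x, y} : Set V) := fun h => (hUT h) (by simp)
  refine ⟨x, y, hxy, hunotin, hwnotin, ?_⟩
  intro hreach
  rw [← Set.compl_eq_univ_diff] at hreach
  obtain ⟨q⟩ := reachIn_iff_walk.mp hreach
  have hq : q.bypass.IsPath := q.bypass_isPath
  have hnadjr : ¬ (restrict G ({x, y}ᶜ : Set V)).Adj u w := fun h => hnadj h.1
  obtain ⟨c, d, M, huc, hdw, hM, hMsub, huM, hwM⟩ := middle_extract q.bypass hq hnadjr hne
  -- M avoids x, y and u, w
  have hMxy : ∀ v ∈ M.support, v ∈ ({x, y}ᶜ : Set V) := by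
    intro v hv
    have hvq : v ∈ q.bypass.support := hMsub v hv
    rcases walk_support_mem q.bypass v hvq with rfl | h
    · exact hunotin
    · exact h
  have hMuw : ∀ v ∈ M.support, v ∈ ({u, w}ᶜ : Set V) := by
    intro v hv
    rintro (h | h)
    · exact huM (h ▸ hv)
    · rw [Set.mem_singleton_iff] at h; exact hwM (h ▸ hv)
  -- convert M to a walk of G₀
  have hMup : ∀ v ∈ (upWalk M).support, v ∈ ({u, w}ᶜ : Set V) := by
    rw [upWalk_support]; exact hMuw
  obtain ⟨M', hM's⟩ := downWalk (upWalk M) hMup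
  have hcA : c ∈ A := huc.1
  have hdB : d ∈ B := (hdw.1).symm
  obtain ⟨s, hs, hsM⟩ := hS'sep hcA hdB M'
  have hsU : s ∈ ({x, y} : Set V) := hSU hs
  rw [hM's, upWalk_support] at hsM
  exact (hMxy s hsM) hsU

/-! ### Finding a 2-cut when an adjacent pair has no three disjoint paths -/

lemma edge_path_eq {G : SimpleGraph V} {u w : V} (hadj : G.Adj u w) {p : G.Walk u w}
    (hp : p.IsPath) (hin : s(u, w) ∈ p.edges) :
    p = SimpleGraph.Walk.cons hadj SimpleGraph.Walk.nil := by
  cases p with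
  | nil => simp at hin
  | cons h1 p1 =>
      rw [SimpleGraph.Walk.cons_isPath_iff] at hp
      rw [SimpleGraph.Walk.edges_cons, List.mem_cons] at hin
      rcases hin with h | h
      · rcases Sym2.eq_iff.mp h.symm with ⟨-, hcw⟩ | ⟨huc, -⟩
        · subst hcw
          have := closed_path_nil hp.1
          subst this
          rfl
        · exact absurd huc hadj.ne
      · exact absurd (p1.fst_mem_support_of_mem_edges (by rwa [Sym2.eq_swap] at h)) hp.2

lemma cut_of_adj {G : SimpleGraph V} (hbi : Biconnected G) (hdeg : ∀ v, 3 ≤ deg G v)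
    {u w : V} (hadj : G.Adj u w)
    (hbad : ¬ ∃ p q r : G.Walk u w, p.IsPath ∧ q.IsPath ∧ r.IsPath ∧
      p ≠ q ∧ p ≠ r ∧ q ≠ r ∧
      InternallyDisjoint p q ∧ InternallyDisjoint p r ∧ InternallyDisjoint q r) :
    ∃ x y : V, x ≠ y ∧ ∃ a b : V, a ∉ ({x, y} : Set V) ∧ b ∉ ({x, y} : Set V) ∧
      ¬ reachIn G (Set.univ \ {x, y}) a b := by
  classical
  have hne : u ≠ w := hadj.ne
  set H := G.deleteEdges {s(u, w)} with hH
  have hnadjH : ¬ H.Adj u w := by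
    rw [hH, SimpleGraph.deleteEdges_adj]
    rintro ⟨-, h⟩
    exact h rfl
  have hHG : ∀ {a b : V}, H.Adj a b → G.Adj a b := by
    intro a b h
    rw [hH, SimpleGraph.deleteEdges_adj] at h
    exact h.1
  set A := H.neighborSet u with hA
  set B := H.neighborSet w with hB
  set G₀ := restrict H ({u, w}ᶜ : Set V) with hG₀
  have hAdef : ∀ {x : V}, x ∈ A → H.Adj u x := by
    intro x hx; rwa [hA, SimpleGraph.mem_neighborSet] at hx
  have hBdef : ∀ {x : V}, x ∈ B → H.Adj w x := by
    intro x hx; rwa [hB, SimpleGraph.mem_neighborSet] at hx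
  have hAu : ∀ a' ∈ A, a' ∉ ({u, w} : Set V) := by
    intro a' ha'
    rintro (h | h)
    · exact (hAdef ha').ne h.symm
    · rw [Set.mem_singleton_iff] at h; exact hnadjH (h ▸ hAdef ha')
  -- no two disjoint A–B paths in G₀
  have hnofam : ¬ MengerFam G₀ A B 2 := by
    rintro ⟨L, hLl, hLp⟩
    match L, hLl, hLp with
    | [P, Q], _, hLp =>
      rw [List.pairwise_cons] at hLp
      obtain ⟨h1, -⟩ := hLp
      have hPQ : PDisj P Q := h1 Q (by simp)
      obtain ⟨Wp, hWp, hWps⟩ := mk_uw_path hnadjH hne P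
      obtain ⟨Wq, hWq, hWqs⟩ := mk_uw_path hnadjH hne Q
      have hHsub : ∀ (W : H.Walk u w), ∀ e ∈ W.edges, e ∈ G.edgeSet :=
        fun W e he => SimpleGraph.edgeSet_mono (SimpleGraph.deleteEdges_le _)
          (W.edges_subset_edgeSet he)
      set Wp' := Wp.transfer G (hHsub Wp) with hWp'
      set Wq' := Wq.transfer G (hHsub Wq) with hWq'
      have hWp's : Wp'.support = Wp.support := SimpleGraph.Walk.support_transfer _ _
      have hWq's : Wq'.support = Wq.support := SimpleGraph.Walk.support_transfer _ _
      have hstart : ∀ (X : PB G₀ A B), X.a ≠ u ∧ X.a ≠ w := by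
        intro X
        constructor
        · exact fun h => (hAdef X.ha).ne h.symm
        · intro h; exact hnadjH (h ▸ hAdef X.ha)
      set E : G.Walk u w := SimpleGraph.Walk.cons hadj SimpleGraph.Walk.nil with hE
      have hEs : E.support = [u, w] := by rw [hE]; simp
      have hEpath : E.IsPath := by
        rw [hE, SimpleGraph.Walk.cons_isPath_iff]
        exact ⟨SimpleGraph.Walk.IsPath.nil, by simp [hne]⟩
      have hWpE : Wp' ≠ E := by
        intro h
        have h1 : P.a ∈ Wp'.support := by
          rw [hWp's]; exact (hWps P.a).mpr (Or.inr (Or.inr P.walk.start_mem_support))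
        rw [h, hEs, List.mem_cons, List.mem_singleton] at h1
        rcases h1 with h1 | h1
        · exact (hstart P).1 h1
        · exact (hstart P).2 h1
      have hWqE : Wq' ≠ E := by
        intro h
        have h1 : Q.a ∈ Wq'.support := by
          rw [hWq's]; exact (hWqs Q.a).mpr (Or.inr (Or.inr Q.walk.start_mem_support))
        rw [h, hEs, List.mem_cons, List.mem_singleton] at h1
        rcases h1 with h1 | h1
        · exact (hstart Q).1 h1
        · exact (hstart Q).2 h1
      have hWpq : Wp' ≠ Wq' := by
        intro h
        have h1 : P.a ∈ Wp'.support := by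
          rw [hWp's]; exact (hWps P.a).mpr (Or.inr (Or.inr P.walk.start_mem_support))
        rw [h, hWq's] at h1
        rcases (hWqs P.a).mp h1 with h1 | h1 | h1
        · exact (hstart P).1 h1
        · exact (hstart P).2 h1
        · exact hPQ P.a P.walk.start_mem_support h1
      have hIDpq : InternallyDisjoint Wp' Wq' := by
        intro v h1 h2
        rw [hWp's] at h1
        rw [hWq's] at h2
        rcases (hWps v).mp h1 with h | h | h
        · exact Or.inl h
        · exact Or.inr h
        rcases (hWqs v).mp h2 with h' | h' | h'
        · exact Or.inl h'
        · exact Or.inr h'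
        · exact absurd (hPQ v h h') not_false
      have hIDE : ∀ (W : G.Walk u w), InternallyDisjoint W E := by
        intro W v _ h2
        rw [hEs, List.mem_cons, List.mem_singleton] at h2
        exact h2
      exact hbad ⟨Wp', Wq', E, hWp.transfer _, hWq.transfer _, hEpath,
        hWpq, hWpE, hWqE, hIDpq, hIDE Wp', hIDE Wq'⟩
  obtain ⟨S, hSsep, hScard⟩ := small_separator_of_no_fam hnofam
  have havoid : ∀ (a' b' : V), a' ∈ A → b' ∈ B → ∀ p : G₀.Walk a' b',
      ∀ v ∈ p.support, v ∉ ({u, w} : Set V) := by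
    intro a' b' ha' _ p v hv
    rcases walk_support_mem p v hv with h | h
    · rw [h]; exact hAu a' ha'
    · exact h
  have hS'sep : Sep G₀ A B (S \ {u, w}) := by
    intro a' b' ha' hb' p
    obtain ⟨s, hs, hsp⟩ := hSsep ha' hb' p
    exact ⟨s, ⟨hs, havoid a' b' ha' hb' p s hsp⟩, hsp⟩
  have hS'card : (S \ {u, w}).ncard ≤ 1 := by
    have := Set.ncard_le_ncard (Set.diff_subset : S \ {u, w} ⊆ S) (S.toFinite)
    omega
  -- the cut is nonempty, thanks to biconnectivity
  have hS'ne0 : S \ {u, w} ≠ ∅ := by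
      intro hempty
      obtain ⟨p, q, hp, hq, hpq, -⟩ := hbi u w hne
      have hone : ∃ P0 : G.Walk u w, P0.IsPath ∧ s(u, w) ∉ P0.edges := by
        by_cases h1 : s(u, w) ∈ p.edges
        · by_cases h2 : s(u, w) ∈ q.edges
          · exact absurd ((edge_path_eq hadj hp h1).trans (edge_path_eq hadj hq h2).symm) hpq
          · exact ⟨q, hq, h2⟩
        · exact ⟨p, hp, h1⟩
      obtain ⟨P0, hP0, hP0e⟩ := hone
      have hP0H : ∀ e ∈ P0.edges, e ∈ H.edgeSet := by
        intro e he
        rw [hH, SimpleGraph.edgeSet_deleteEdges]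
        exact ⟨P0.edges_subset_edgeSet he, by rintro rfl; exact hP0e he⟩
      have hP0path : (P0.transfer H hP0H).IsPath := hP0.transfer _
      obtain ⟨c, d, M, huc, hdw, hM, hMsub, huM, hwM⟩ :=
        middle_extract (P0.transfer H hP0H) hP0path hnadjH hne
      have hMuw : ∀ v ∈ M.support, v ∈ ({u, w}ᶜ : Set V) := by
        intro v hv
        rintro (h | h)
        · exact huM (h ▸ hv)
        · rw [Set.mem_singleton_iff] at h; exact hwM (h ▸ hv)
      obtain ⟨M', hM's⟩ := downWalk M hMuw
      obtain ⟨s, hs, -⟩ := hS'sep (huc : H.Adj u c) ((hdw : H.Adj d w).symm) M'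
      rw [hempty] at hs
      exact hs
  have hS'ne : (S \ {u, w}).ncard = 1 := by
    have hnz : (S \ {u, w}).ncard ≠ 0 :=
      fun h => hS'ne0 ((Set.ncard_eq_zero (Set.toFinite _)).mp h)
    omega
  obtain ⟨z, hz⟩ := Set.ncard_eq_one.mp hS'ne
  have hzu : z ≠ u := by
    have : z ∈ S \ {u, w} := by rw [hz]; rfl
    exact fun h => this.2 (by simp [h])
  have hzw : z ≠ w := by
    have : z ∈ S \ {u, w} := by rw [hz]; rfl
    exact fun h => this.2 (by simp [h])
  -- w is not reachable from u in H − z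
  have hwRu : ¬ reachIn H ({z}ᶜ : Set V) u w := by
    intro hr
    obtain ⟨q⟩ := reachIn_iff_walk.mp hr
    have hnadjr : ¬ (restrict H ({z}ᶜ : Set V)).Adj u w := fun h => hnadjH h.1
    obtain ⟨c, d, M, huc, hdw, hM, hMsub, huM, hwM⟩ :=
      middle_extract q.bypass q.bypass_isPath hnadjr hne
    have hMz : ∀ v ∈ M.support, v ∈ ({z}ᶜ : Set V) := by
      intro v hv
      rcases walk_support_mem q.bypass v (hMsub v hv) with h | h
      · rw [h]; exact fun hh => hzu (Set.mem_singleton_iff.mp hh).symm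
      · exact h
    have hMuw : ∀ v ∈ M.support, v ∈ ({u, w}ᶜ : Set V) := by
      intro v hv
      rintro (h | h)
      · exact huM (h ▸ hv)
      · rw [Set.mem_singleton_iff] at h; exact hwM (h ▸ hv)
    have hMup : ∀ v ∈ (upWalk M).support, v ∈ ({u, w}ᶜ : Set V) := by
      rw [upWalk_support]; exact hMuw
    obtain ⟨M', hM's⟩ := downWalk (upWalk M) hMup
    obtain ⟨s, hs, hsM⟩ := hS'sep (huc.1 : H.Adj u c) ((hdw.1 : H.Adj d w).symm) M'
    rw [hz, Set.mem_singleton_iff] at hs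
    subst hs
    rw [hM's, upWalk_support] at hsM
    exact (hMz s hsM) rfl
  -- u has an H-neighbor different from z
  have hNH : 2 ≤ (H.neighborSet u).ncard := by
    have hsub : G.neighborSet u \ {w} ⊆ H.neighborSet u := by
      intro x hx
      have hGx : G.Adj u x := hx.1
      have hxw : x ≠ w := fun h => hx.2 (by simp [h])
      show H.Adj u x
      rw [hH, SimpleGraph.deleteEdges_adj]
      refine ⟨hGx, ?_⟩
      intro hh
      rcases Sym2.eq_iff.mp hh with ⟨-, h2⟩ | ⟨h1, -⟩
      · exact hxw h2
      · exact hne h1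
    have h1 : G.neighborSet u ⊆ (G.neighborSet u \ {w}) ∪ {w} := by
      intro x hx
      by_cases hxw : x = w
      · exact Or.inr (by simp [hxw])
      · exact Or.inl ⟨hx, by simp [hxw]⟩
    have h2 := Set.ncard_union_le (G.neighborSet u \ {w}) ({w} : Set V)
    have h3 := Set.ncard_le_ncard h1 (Set.toFinite _)
    have h4 := Set.ncard_le_ncard hsub ((H.neighborSet u).toFinite)
    have h5 := hdeg u
    rw [deg] at h5
    rw [Set.ncard_singleton] at h2
    omega
  obtain ⟨c0, hc0, hc0z⟩ : ∃ c0 ∈ H.neighborSet u, c0 ≠ z := by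
    by_contra hcon
    push_neg at hcon
    have : H.neighborSet u ⊆ {z} := fun x hx => hcon x hx
    have := Set.ncard_le_ncard this (Set.toFinite _)
    rw [Set.ncard_singleton] at this
    omega
  have hc0adj : H.Adj u c0 := hc0
  refine ⟨u, z, hzu.symm, c0, w, ?_, ?_, ?_⟩
  · rintro (h | h)
    · exact hc0adj.ne h.symm
    · rw [Set.mem_singleton_iff] at h; exact hc0z h
  · rintro (h | h)
    · exact hne h.symm
    · rw [Set.mem_singleton_iff] at h; exact hzw h.symm
  · intro hr
    rw [← Set.compl_eq_univ_diff] at hr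
    have hr' : reachIn H ({z}ᶜ : Set V) c0 w := by
      refine Relation.ReflTransGen.mono ?_ _ _ hr
      rintro a' b' ⟨hGab, ha', hb'⟩
      have ha'u : a' ≠ u := fun h => ha' (by simp [h])
      have hb'u : b' ≠ u := fun h => hb' (by simp [h])
      refine ⟨?_, ?_, ?_⟩
      · rw [hH, SimpleGraph.deleteEdges_adj]
        refine ⟨hGab, ?_⟩
        intro hh
        rcases Sym2.eq_iff.mp hh with ⟨h1, -⟩ | ⟨-, h2⟩
        · exact ha'u h1
        · exact hb'u h2
      · exact fun h => ha' (by simp [Set.mem_singleton_iff.mp h])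
      · exact fun h => hb' (by simp [Set.mem_singleton_iff.mp h])
    have hstep : reachIn H ({z}ᶜ : Set V) u c0 := by
      refine Relation.ReflTransGen.single ⟨hc0adj, ?_, ?_⟩
      · exact fun h => hzu (Set.mem_singleton_iff.mp h).symm
      · exact fun h => hc0z (Set.mem_singleton_iff.mp h)
    exact hwRu (reachIn_trans hstep hr')

/-! ### The degree-two shortcut -/

lemma cut_of_deg2 {G : SimpleGraph V} (hV : 4 ≤ Fintype.card V) {v : V} (h2 : deg G v = 2) :
    ∃ x y : V, x ≠ y ∧ ∃ a b : V, a ∉ ({x, y} : Set V) ∧ b ∉ ({x, y} : Set V) ∧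
      ¬ reachIn G (Set.univ \ {x, y}) a b := by
  rw [deg] at h2
  obtain ⟨x, y, hxy, hN⟩ := Set.ncard_eq_two.mp h2
  have hvx : G.Adj v x := by
    have : x ∈ G.neighborSet v := by rw [hN]; exact Or.inl rfl
    exact this
  have hvy : G.Adj v y := by
    have : y ∈ G.neighborSet v := by rw [hN]; exact Or.inr rfl
    exact this
  obtain ⟨b, hb⟩ : ∃ b, b ∉ ({v, x, y} : Set V) := by
    by_contra hcon
    push_neg at hcon
    have hsub : (Set.univ : Set V) ⊆ {v, x, y} := fun z _ => hcon z
    have h1 := Set.ncard_le_ncard hsub (Set.toFinite _)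
    have h2 := Set.ncard_insert_le v ({x, y} : Set V)
    have h3 := Set.ncard_insert_le x ({y} : Set V)
    rw [Set.ncard_univ, Nat.card_eq_fintype_card] at h1
    rw [Set.ncard_singleton] at h3
    omega
  refine ⟨x, y, hxy, v, b, ?_, ?_, ?_⟩
  · rintro (h | h)
    · exact hvx.ne h
    · rw [Set.mem_singleton_iff] at h; exact hvy.ne h
  · intro h
    apply hb
    rcases h with h | h
    · exact Or.inr (Or.inl h)
    · rw [Set.mem_singleton_iff] at h; exact Or.inr (Or.inr (by simp [h]))
  · intro hr
    rcases Relation.ReflTransGen.cases_head hr with h | ⟨c, ⟨hadj, -, hcS⟩, -⟩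
    · exact hb (Or.inl h.symm)
    · have : c ∈ G.neighborSet v := hadj
      rw [hN] at this
      exact hcS.2 this

lemma deg_le_card {G : SimpleGraph V} (v : V) : deg G v ≤ Fintype.card V - 1 := by
  rw [deg]
  have hsub : G.neighborSet v ⊆ Set.univ \ {v} := by
    intro x hx
    exact ⟨trivial, fun h => (hx : G.Adj v x).ne' (Set.mem_singleton_iff.mp h)⟩
  have h1 := Set.ncard_le_ncard hsub (Set.toFinite _)
  have h2 : (Set.univ \ {v} : Set V).ncard = Fintype.card V - 1 := by
    rw [Set.ncard_diff (Set.subset_univ _) (Set.toFinite _), Set.ncard_univ,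
      Nat.card_eq_fintype_card, Set.ncard_singleton]
  omega

end Aux
/-- **Cunningham–Edmonds base case.**  A biconnected simplicial
graph which is not triconnected, not a cycle, and not homeomorphic to any theta
graph `Θ_n` admits a 2-cut `{x, y}` such that each `{x, y}`-component has
strictly fewer edges than `G` after completion (adding an edge `e_{xy}`). -/
theorem exists_splitting_two_cut
    [Fintype V] (G : SimpleGraph V)
    (hbi : Biconnected G) (htri : ¬ Triconnected G)
    (hcyc : ¬ IsCycleGraph G) (htheta : ¬ IsThetaGraph G) :
    ∃ x y : V, x ≠ y ∧
      -- `{x, y}` is a 2-cut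
      (∃ a b : V, a ∉ ({x, y} : Set V) ∧ b ∉ ({x, y} : Set V) ∧
        ¬ reachIn G (Set.univ \ {x, y}) a b) ∧
      -- each completed `{x, y}`-component is strictly smaller than `G`
      ∀ a : V, a ∉ ({x, y} : Set V) →
        ({e ∈ G.edgeSet | ∃ w, w ∈ e ∧
            reachIn G (Set.univ \ {x, y}) a w}).ncard + 1
          < G.edgeSet.ncard := by
  classical
  by_cases hcard1 : Fintype.card V ≤ 1
  · exact absurd (fun u w hne => absurd (Fintype.card_le_one_iff.mp hcard1 u w) hne) htri
  push_neg at hcard1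
  have hdeg2 : ∀ v : V, 2 ≤ deg G v := by
    intro v
    obtain ⟨w, hw⟩ := Fintype.exists_ne_of_one_lt_card hcard1 v
    exact deg_ge_two hbi (Ne.symm hw)
  have hnonempty : Nonempty V := Fintype.card_pos_iff.mp (by omega)
  have hcard3 : 3 ≤ Fintype.card V := by
    obtain ⟨v⟩ := hnonempty
    have := deg_le_card (G := G) v
    have := hdeg2 v
    omega
  by_cases hcard3' : Fintype.card V = 3
  · exfalso
    apply hcyc
    refine ⟨hnonempty, ⟨?_⟩, ?_⟩
    · intro u w
      rcases eq_or_ne u w with rfl | hne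
      · exact SimpleGraph.Reachable.refl u
      · obtain ⟨p, -, -, -, -⟩ := hbi u w hne
        exact p.reachable
    · intro v
      have h1 := deg_le_card (G := G) v
      have h2 := hdeg2 v
      omega
  have hV4 : 4 ≤ Fintype.card V := by omega
  by_cases hdeg2ex : ∃ v, deg G v = 2
  · obtain ⟨v, hv⟩ := hdeg2ex
    obtain ⟨x, y, hxy, a, b, ha, hb, hnr⟩ := cut_of_deg2 hV4 hv
    exact ⟨x, y, hxy, ⟨a, b, ha, hb, hnr⟩, counting hbi hxy ha hb hnr⟩
  · have hdeg3 : ∀ v, 3 ≤ deg G v := by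
      intro v
      have h1 := hdeg2 v
      have h2 : deg G v ≠ 2 := fun h => hdeg2ex ⟨v, h⟩
      omega
    rw [Triconnected] at htri
    push_neg at htri
    obtain ⟨u, w, hne, hbad⟩ := htri
    have hbad' : ¬ ∃ p q r : G.Walk u w, p.IsPath ∧ q.IsPath ∧ r.IsPath ∧
        p ≠ q ∧ p ≠ r ∧ q ≠ r ∧
        InternallyDisjoint p q ∧ InternallyDisjoint p r ∧ InternallyDisjoint q r := by
      rintro ⟨p, q, r, h1, h2, h3, h4, h5, h6, h7, h8, h9⟩
      exact hbad p q r h1 h2 h3 h4 h5 h6 h7 h8 h9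
    by_cases hadj : G.Adj u w
    · obtain ⟨x, y, hxy, a, b, ha, hb, hnr⟩ := cut_of_adj hbi hdeg3 hadj hbad'
      exact ⟨x, y, hxy, ⟨a, b, ha, hb, hnr⟩, counting hbi hxy ha hb hnr⟩
    · obtain ⟨x, y, hxy, hu, hw, hnr⟩ := cut_of_nonadj hV4 hne hadj hbad'
      exact ⟨x, y, hxy, ⟨u, w, hu, hw, hnr⟩, counting hbi hxy hu hw hnr⟩

end GraphDecomposition
end

section
/- If a connected simplicial graph Γ has minimal simplicial model with at least one 1-cut, then there exists a 1-cut x such that every x-component of Γ has strictly fewer 1-cuts (in its own minimal simplicial model) than Γ does; and Γ has no 1-cuts if and only if Γ is biconnected, a single vertex, or a single edge. -/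
namespace GraphOneCuts

variable {V : Type}

/-- Adjacency within a set `S` of allowed vertices. -/
def adjIn (G : SimpleGraph V) (S : Set V) (a b : V) : Prop :=
  G.Adj a b ∧ a ∈ S ∧ b ∈ S

/-- Reachability within a set `S` of allowed vertices. -/
def reachIn (G : SimpleGraph V) (S : Set V) (a b : V) : Prop :=
  Relation.ReflTransGen (adjIn G S) a b

/-- `x` is a cut vertex of the induced subgraph on `S`. -/
def cutIn (G : SimpleGraph V) (S : Set V) (x : V) : Prop :=
  x ∈ S ∧ ∃ a b : V, a ∈ S \ {x} ∧ b ∈ S \ {x} ∧ ¬ reachIn G (S \ {x}) a b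

/-- The 1-cuts of the minimal simplicial model of the induced subgraph on `S`:
its essential (valence ≥ 3) cut vertices.  (Bivalent vertices are smoothed in
the minimal simplicial model, so they contribute no 1-cuts.) -/
def oneCutsIn (G : SimpleGraph V) (S : Set V) : Set V :=
  {x | cutIn G S x ∧ 3 ≤ (G.neighborSet x ∩ S).ncard}

/-- The `{x}`-component of `G` containing `a`: the closure of the connected
component of `G ∖ x` containing `a`. -/
def componentOf (G : SimpleGraph V) (x a : V) : Set V :=
  {w | reachIn G (Set.univ \ {x}) a w} ∪ {x}

/-- Two walks with the same endpoints are internally disjoint. -/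
def InternallyDisjoint {G : SimpleGraph V} {u w : V} (p q : G.Walk u w) : Prop :=
  ∀ y, y ∈ p.support → y ∈ q.support → y = u ∨ y = w

/-- Biconnectivity: any two distinct vertices are joined by two distinct
internally disjoint paths. -/
def Biconnected (G : SimpleGraph V) : Prop :=
  ∀ u w : V, u ≠ w → ∃ p q : G.Walk u w, p.IsPath ∧ q.IsPath ∧ p ≠ q ∧
    InternallyDisjoint p q

/-- `G` is homeomorphic to the single-edge graph `K₁,₁`, i.e. is a path graph
on at least two vertices: connected, all degrees at most 2, and some vertex of
degree 1. -/
def IsPathGraph (G : SimpleGraph V) : Prop :=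
  G.Connected ∧ (∀ v, (G.neighborSet v).ncard ≤ 2) ∧
    ∃ v, (G.neighborSet v).ncard = 1


variable {G : SimpleGraph V} {S T : Set V} {a b c d u v w x y z : V}

lemma reachIn_mono (hST : S ⊆ T) (h : reachIn G S a b) : reachIn G T a b :=
  by
  induction h with
  | refl => exact .refl
  | tail _ st ih => exact .tail ih ⟨st.1, hST st.2.1, hST st.2.2⟩

lemma reachIn.symm (h : reachIn G S a b) : reachIn G S b a := by
  induction h with
  | refl => exact .refl
  | tail _ step ih => exact .trans (.single ⟨step.1.symm, step.2.2, step.2.1⟩) ih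

lemma reachIn.trans (h : reachIn G S a b) (h' : reachIn G S b c) : reachIn G S a c :=
  Relation.ReflTransGen.trans h h'

lemma walk_of_reachIn (h : reachIn G S a b) (ha : a ∈ S) :
    ∃ W : G.Walk a b, ∀ v ∈ W.support, v ∈ S := by
  induction h with
  | refl => exact ⟨.nil, by simp [ha]⟩
  | tail _ step ih =>
    obtain ⟨W, hW⟩ := ih
    refine ⟨W.concat step.1, ?_⟩
    intro v hv
    rw [SimpleGraph.Walk.support_concat] at hv
    rw [List.mem_append, List.mem_singleton] at hv
    rcases hv with hv | rfl
    · exact hW v hv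
    · exact step.2.2

lemma reachIn_of_walk (W : G.Walk a b) (hW : ∀ v ∈ W.support, v ∈ S) :
    reachIn G S a b := by
  induction W with
  | nil => exact .refl
  | cons h p ih =>
    refine Relation.ReflTransGen.head ⟨h, ?_, ?_⟩ (ih ?_)
    · exact hW _ (by simp)
    · exact hW _ (by simp [SimpleGraph.Walk.start_mem_support])
    · intro v hv; exact hW v (by simp [hv])

/-- first-step extraction -/
lemma reachIn_first_step (h : reachIn G S a b) (hab : a ≠ b) :
    ∃ z, adjIn G S a z ∧ reachIn G S z b := by
  rcases Relation.ReflTransGen.cases_head h with rfl | ⟨z, hz, h'⟩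
  · exact absurd rfl hab
  · exact ⟨z, hz, h'⟩

lemma mem_S_of_reachIn (h : reachIn G S a b) (hab : a ≠ b) : a ∈ S := by
  obtain ⟨z, hz, -⟩ := reachIn_first_step h hab
  exact hz.2.1


open SimpleGraph Walk in
/-- If `a` has only `b` as an `S`-neighbour, removing `a` does not disconnect
vertices other than `a`. -/
lemma splice (hb : ∀ z, G.Adj a z → z ∈ S → z = b) (hc : c ≠ a) (hd : d ≠ a)
    (h : reachIn G S c d) : reachIn G (S \ {a}) c d := by
  haveI := Classical.decEq V
  by_cases hcd : c = d
  · subst hcd; exact .refl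
  have hcS : c ∈ S := by
    obtain ⟨z, hz, -⟩ := reachIn_first_step h hcd; exact hz.2.1
  obtain ⟨W, hW⟩ := walk_of_reachIn h hcS
  set P := W.bypass with hP
  have hsub : ∀ v ∈ P.support, v ∈ S := fun v hv => hW v (W.support_bypass_subset hv)
  have hnd : P.support.Nodup := (W.bypass_isPath).2
  have haP : a ∉ P.support := by
    intro haP
    set t := P.takeUntil a haP with ht
    set r := P.dropUntil a haP with hr
    -- b is in r.support.tail
    obtain ⟨z, hz, r₂, hr₂⟩ := r.exists_eq_cons_of_ne (Ne.symm hd)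
    have hzb : z = b := hb z hz (hsub z (by
      have : z ∈ r.support := by rw [hr₂]; simp [SimpleGraph.Walk.support_cons]
      exact P.support_dropUntil_subset haP this))
    have hbr : b ∈ r.support.tail := by
      rw [hr₂, SimpleGraph.Walk.support_cons]
      simpa using hzb ▸ r₂.start_mem_support
    -- b is in t.support
    obtain ⟨z', hz', t₂, ht₂⟩ := t.reverse.exists_eq_cons_of_ne (Ne.symm hc)
    have hz'b : z' = b := hb z' hz' (hsub z' (by
      have : z' ∈ t.reverse.support := by rw [ht₂]; simp
      rw [SimpleGraph.Walk.support_reverse, List.mem_reverse] at this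
      exact P.support_takeUntil_subset haP this))
    have hbt : b ∈ t.support := by
      have : z' ∈ t.reverse.support := by rw [ht₂]; simp
      rw [SimpleGraph.Walk.support_reverse, List.mem_reverse] at this
      exact hz'b ▸ this
    have hspec := P.take_spec haP
    have : P.support = t.support ++ r.support.tail := by
      rw [← hspec, SimpleGraph.Walk.support_append]
    rw [this] at hnd
    exact (List.disjoint_of_nodup_append hnd) hbt hbr
  refine reachIn_of_walk P (fun v hv => ⟨hsub v hv, ?_⟩)
  simp only [Set.mem_singleton_iff]
  rintro rfl; exact haP hv

/-- The open component. -/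
def comp (G : SimpleGraph V) (x a : V) : Set V := {w | reachIn G (Set.univ \ {x}) a w}

lemma comp_self : a ∈ comp G x a := Relation.ReflTransGen.refl

lemma componentOf_eq : componentOf G x a = comp G x a ∪ {x} := rfl

lemma memC_ne (ha : a ≠ x) (hw : w ∈ comp G x a) : w ≠ x := by
  rcases (Relation.ReflTransGen.cases_tail hw) with rfl | ⟨z, _, hstep⟩
  · exact ha
  · exact fun h => hstep.2.2.2 (by simp [h])

lemma C_closed (ha : a ≠ x) (hw : w ∈ comp G x a) (hadj : G.Adj w z) (hz : z ≠ x) :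
    z ∈ comp G x a :=
  Relation.ReflTransGen.tail hw ⟨hadj, ⟨trivial, memC_ne ha hw⟩, ⟨trivial, hz⟩⟩

lemma reach_in_comp (ha : a ≠ x) (hc : c ∈ comp G x a)
    (h : reachIn G (Set.univ \ {x}) c d) : reachIn G (comp G x a) c d := by
  induction h with
  | refl => exact .refl
  | @tail b' d' h1 step ih =>
    have hb' : b' ∈ comp G x a := Relation.ReflTransGen.trans hc h1
    have hd' : d' ∈ comp G x a := Relation.ReflTransGen.tail hb' step
    exact Relation.ReflTransGen.tail ih ⟨step.1, hb', hd'⟩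

lemma comp_reach (ha : a ≠ x) (hc : c ∈ comp G x a) (hd : d ∈ comp G x a) :
    reachIn G (comp G x a) c d :=
  reach_in_comp ha hc (Relation.ReflTransGen.trans (reachIn.symm hc) hd)

lemma enter (ha : a ≠ x) (W : G.Walk u v) (hu : u ∉ componentOf G x a)
    (hv : v ∈ componentOf G x a) : x ∈ W.support := by
  induction W with
  | nil => exact absurd hv hu
  | @cons u' z v' h W₁ ih =>
    by_cases hz : z ∈ componentOf G x a
    · have hzx : z = x := by
        rcases hz with hz | hz
        · exfalso
          have hu'x : u' ≠ x := fun h' => hu (Or.inr (by simp [h']))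
          exact hu (Or.inl (C_closed ha hz h.symm hu'x))
        · exact hz
      subst hzx; simp
    · have := ih hz hv
      simp [this]

lemma stay (ha : a ≠ x) : ∀ (n : ℕ) (u v : V) (W : G.Walk u v), W.length ≤ n →
    u ∈ componentOf G x a → v ∈ componentOf G x a →
    ∃ W' : G.Walk u v, (∀ s ∈ W'.support, s ∈ componentOf G x a) ∧
      (∀ s ∈ W'.support, s ∈ W.support) := by
  haveI := Classical.decEq V
  intro n
  induction n with
  | zero =>
    intro u v W hlen hu hv
    cases W with
    | nil => exact ⟨.nil, by simpa using hu, by simp⟩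
    | cons h W₁ => simp [SimpleGraph.Walk.length_cons] at hlen
  | succ n ih =>
    intro u v W hlen hu hv
    cases W with
    | nil => exact ⟨.nil, by simpa using hu, by simp⟩
    | @cons _ z _ h W₁ =>
      rw [SimpleGraph.Walk.length_cons, Nat.succ_le_succ_iff] at hlen
      by_cases hz : z ∈ componentOf G x a
      · obtain ⟨W₁', h1, h2⟩ := ih z v W₁ hlen hz hv
        refine ⟨.cons h W₁', ?_, ?_⟩ <;> intro s hs <;>
          rw [SimpleGraph.Walk.support_cons, List.mem_cons] at hs <;>
          rcases hs with rfl | hs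
        · exact hu
        · exact h1 s hs
        · simp
        · simp [h2 s hs]
      · have hux : u = x := by
          rcases hu with hu | hu
          · exfalso
            have hzx : z ≠ x := fun h' => hz (Or.inr (by simp [h']))
            exact hz (Or.inl (C_closed ha hu h hzx))
          · exact hu
        subst hux
        have hxW₁ : u ∈ W₁.support := enter ha W₁ hz hv
        have hlen2 : (W₁.dropUntil u hxW₁).length ≤ n :=
          le_trans (SimpleGraph.Walk.length_dropUntil_le W₁ hxW₁) hlen
        obtain ⟨W'', h1, h2⟩ := ih u v (W₁.dropUntil u hxW₁) hlen2 (Or.inr rfl) hv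
        refine ⟨W'', h1, fun s hs => ?_⟩
        have := W₁.support_dropUntil_subset hxW₁ (h2 s hs)
        simp [this]

/-- Lifting a cut vertex of a component to a cut vertex of the whole graph. -/
lemma cut_lift (ha : a ≠ x) (hyx : y ≠ x) (h : cutIn G (componentOf G x a) y) :
    cutIn G Set.univ y := by
  obtain ⟨hyΔ, c, d, ⟨hcΔ, hcy⟩, ⟨hdΔ, hdy⟩, hnr⟩ := h
  simp only [Set.mem_singleton_iff] at hcy hdy
  refine ⟨trivial, c, d, ⟨trivial, hcy⟩, ⟨trivial, hdy⟩, fun hr => hnr ?_⟩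
  obtain ⟨W, hW⟩ := walk_of_reachIn hr ⟨trivial, hcy⟩
  obtain ⟨W', h1, h2⟩ := stay ha W.length c d W le_rfl hcΔ hdΔ
  exact reachIn_of_walk W' (fun s hs => ⟨h1 s hs, (hW s (h2 s hs)).2⟩)

lemma not_cut_x (ha : a ≠ x) (h : cutIn G (componentOf G x a) x) : False := by
  obtain ⟨-, c, d, ⟨hcΔ, hcx⟩, ⟨hdΔ, hdx⟩, hnr⟩ := h
  simp only [Set.mem_singleton_iff] at hcx hdx
  have hcC : c ∈ comp G x a := by rcases hcΔ with h | h; exact h; exact absurd h hcx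
  have hdC : d ∈ comp G x a := by rcases hdΔ with h | h; exact h; exact absurd h hdx
  refine hnr (reachIn_mono ?_ (comp_reach ha hcC hdC))
  intro s hs
  exact ⟨Or.inl hs, memC_ne ha hs⟩

/-- Every vertex distinct from `x` can reach a neighbour of `x` avoiding `x`. -/
lemma reach_nbr (hconn : G.Connected) (ha : a ≠ x) :
    ∃ u, G.Adj x u ∧ reachIn G (Set.univ \ {x}) a u := by
  haveI := Classical.decEq V
  obtain ⟨W⟩ := hconn.preconnected a x
  have hx : x ∈ W.support := W.end_mem_support
  set t := W.takeUntil x hx with ht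
  have hcount : t.support.count x = 1 := W.count_support_takeUntil_eq_one hx
  obtain ⟨u, hadj, t₂, ht₂⟩ := t.reverse.exists_eq_cons_of_ne (Ne.symm ha)
  have hxt₂ : x ∉ t₂.support := by
    intro hmem
    have : t.reverse.support = x :: t₂.support := by rw [ht₂]; simp
    have hc2 : t.reverse.support.count x = t.support.count x := by
      rw [SimpleGraph.Walk.support_reverse, List.count_reverse]
    rw [this, List.count_cons_self, hcount] at hc2
    have := List.count_pos_iff.mpr hmem  -- x ∈ t₂ means count ≥ 1
    omega
  refine ⟨u, hadj, reachIn.symm (reachIn_of_walk t₂ ?_)⟩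
  intro s hs
  refine ⟨trivial, fun h => ?_⟩
  simp only [Set.mem_singleton_iff] at h
  subst h; exact hxt₂ hs

/-- Dichotomy: a connected induced graph with a valence-1 vertex either has an
essential cut vertex, or is a path graph. -/
lemma lemD [Fintype V] : ∀ (n : ℕ) (S : Set V) (a : V), S.ncard ≤ n →
    (∀ c ∈ S, ∀ d ∈ S, reachIn G S c d) → a ∈ S →
    (G.neighborSet a ∩ S).ncard = 1 → 2 ≤ S.ncard →
    (∃ z ∈ S, cutIn G S z ∧ 3 ≤ (G.neighborSet z ∩ S).ncard) ∨
    (∃ w ∈ S, w ≠ a ∧ (G.neighborSet w ∩ S).ncard = 1 ∧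
      ∀ v ∈ S, (G.neighborSet v ∩ S).ncard ≤ 2) := by
  intro n
  induction n with
  | zero => intro S a h _ _ _ h2; omega
  | succ n ih =>
    intro S a hn hconnS haS hdeg h2
    obtain ⟨b, hb⟩ := Set.ncard_eq_one.mp hdeg
    have hbNa : b ∈ G.neighborSet a ∩ S := hb ▸ rfl
    have hab : G.Adj a b := hbNa.1
    have hbS : b ∈ S := hbNa.2
    have hnbr : ∀ z, G.Adj a z → z ∈ S → z = b := by
      intro z h1 h2
      have : z ∈ G.neighborSet a ∩ S := ⟨h1, h2⟩
      rwa [hb, Set.mem_singleton_iff] at this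
    have hba : a ≠ b := G.ne_of_adj hab
    have haNb : a ∈ G.neighborSet b ∩ S := ⟨hab.symm, haS⟩
    have hk1 : 1 ≤ (G.neighborSet b ∩ S).ncard := by
      have : 0 < (G.neighborSet b ∩ S).ncard :=
        (Set.ncard_pos (Set.toFinite _)).mpr ⟨a, haNb⟩
      omega
    by_cases h3 : 3 ≤ (G.neighborSet b ∩ S).ncard
    · -- b is an essential cut vertex
      left
      have hex : ∃ c ∈ G.neighborSet b ∩ S, c ≠ a := by
        by_contra hcon
        push_neg at hcon
        have hsub : G.neighborSet b ∩ S ⊆ {a} := fun z hz => hcon z hz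
        have := Set.ncard_le_ncard hsub (Set.toFinite _)
        rw [Set.ncard_singleton] at this
        omega
      obtain ⟨c, hcNb, hca⟩ := hex
      have hcb : c ≠ b := fun h => G.irrefl (h ▸ hcNb.1)
      refine ⟨b, hbS, ⟨hbS, a, c, ⟨haS, hba⟩, ⟨hcNb.2, hcb⟩, fun hr => ?_⟩, h3⟩
      have hac : a ≠ c := fun h => hca (h.symm)
      obtain ⟨z, hz, -⟩ := reachIn_first_step hr hac
      have hzS : z ∈ S := hz.2.2.1
      have hzb : z ≠ b := by
        have := hz.2.2.2
        simpa [Set.mem_singleton_iff] using this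
      exact hzb (hnbr z hz.1 hzS)
    · by_cases hk2 : (G.neighborSet b ∩ S).ncard = 1
      · -- S = {a, b}, path graph with two vertices
        have hNb : G.neighborSet b ∩ S = {a} := by
          obtain ⟨c, hc⟩ := Set.ncard_eq_one.mp hk2
          have : a ∈ ({c} : Set V) := hc ▸ haNb
          rw [Set.mem_singleton_iff] at this
          rw [hc, this]
        have hreach_ab : ∀ u, reachIn G S a u → u ∈ ({a, b} : Set V) := by
          intro u h
          induction h with
          | refl => exact Or.inl rfl
          | @tail m e h1 step ih2 =>
            rcases ih2 with rfl | rfl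
            · have : e ∈ G.neighborSet m ∩ S := ⟨step.1, step.2.2⟩
              rw [hb, Set.mem_singleton_iff] at this
              exact Or.inr this
            · have : e ∈ G.neighborSet m ∩ S := ⟨step.1, step.2.2⟩
              rw [hNb, Set.mem_singleton_iff] at this
              exact Or.inl this
        have hSab : S = {a, b} := by
          apply Set.Subset.antisymm
          · intro u hu
            exact hreach_ab u (hconnS a haS u hu)
          · intro u hu
            rcases hu with rfl | hu
            · exact haS
            · rw [Set.mem_singleton_iff] at hu; subst hu; exact hbS
        right
        refine ⟨b, hbS, fun h => hba h.symm, hk2, ?_⟩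
        intro v hv
        rw [hSab] at hv
        rcases hv with rfl | hv
        · rw [hdeg]; omega
        · rw [Set.mem_singleton_iff] at hv; subst hv; rw [hk2]; omega
      · -- deg b = 2 : peel off the leaf a and recurse
        have hk : (G.neighborSet b ∩ S).ncard = 2 := by omega
        set S' := S \ {a} with hS'
        have hbS' : b ∈ S' := ⟨hbS, fun h => hba (by simpa using h.symm)⟩
        have hNbS' : G.neighborSet b ∩ S' = (G.neighborSet b ∩ S) \ {a} := by
          ext z; simp only [hS', Set.mem_inter_iff, Set.mem_diff,
            Set.mem_singleton_iff]; tauto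
        have hdegb' : (G.neighborSet b ∩ S').ncard = 1 := by
          rw [hNbS', Set.ncard_diff_singleton_of_mem haNb, hk]
        have hpres : ∀ u, u ∈ S' → u ≠ b → G.neighborSet u ∩ S' = G.neighborSet u ∩ S := by
          intro u huS' hub
          ext z
          simp only [hS', Set.mem_inter_iff, Set.mem_diff, Set.mem_singleton_iff]
          constructor
          · tauto
          · rintro ⟨h1, h2⟩
            refine ⟨h1, h2, fun h => ?_⟩
            subst h
            exact hub (hnbr u h1.symm huS'.1)
        have hconnS' : ∀ c ∈ S', ∀ d ∈ S', reachIn G S' c d := by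
          intro c hc d hd
          exact splice hnbr hc.2 hd.2 (hconnS c hc.1 d hd.1)
        have hS'2 : 2 ≤ S'.ncard := by
          obtain ⟨c, hc⟩ := Set.ncard_eq_one.mp hdegb'
          have hcmem : c ∈ G.neighborSet b ∩ S' := by rw [hc]; exact rfl
          have hcS' : c ∈ S' := hcmem.2
          have hcNb' : c ∈ G.neighborSet b := hcmem.1
          have hcb : c ≠ b := fun h => G.irrefl (h ▸ hcNb')
          have hpair : ({b, c} : Set V).ncard = 2 := Set.ncard_pair (fun h => hcb h.symm)
          have hsub2 : ({b, c} : Set V) ⊆ S' := by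
            intro u hu
            rcases hu with rfl | hu
            · exact hbS'
            · rw [Set.mem_singleton_iff] at hu; exact hu ▸ hcS'
          rw [← hpair]
          exact Set.ncard_le_ncard hsub2 (Set.toFinite _)
        have hS'n : S'.ncard ≤ n := by
          have := Set.ncard_diff_singleton_of_mem haS
          rw [hS', this]; omega
        rcases ih S' b hS'n hconnS' hbS' hdegb' hS'2 with
          ⟨z, hzS', hcut', hdeg'⟩ | ⟨w, hwS', hwb, hdegw, hall⟩
        · left
          have hzb : z ≠ b := by
            intro h; rw [h, hdegb'] at hdeg'; omega
          have hNz : G.neighborSet z ∩ S = G.neighborSet z ∩ S' :=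
            (hpres z hzS' hzb).symm
          refine ⟨z, hzS'.1, ⟨hzS'.1, ?_⟩, by rw [hNz]; exact hdeg'⟩
          obtain ⟨-, c, d, ⟨hcS', hcz⟩, ⟨hdS', hdz⟩, hnr⟩ := hcut'
          refine ⟨c, d, ⟨hcS'.1, hcz⟩, ⟨hdS'.1, hdz⟩, fun hr => hnr ?_⟩
          have hza : z ≠ a := fun h => hzS'.2 (by simp [h])
          have hnbr2 : ∀ w', G.Adj a w' → w' ∈ S \ {z} → w' = b :=
            fun w' h1 h2 => hnbr w' h1 h2.1
          have := splice hnbr2 hcS'.2 hdS'.2 hr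
          rwa [Set.diff_diff_comm] at this
        · right
          refine ⟨w, hwS'.1, hwS'.2, ?_, ?_⟩
          · rw [← hpres w hwS' hwb]; exact hdegw
          · intro v hv
            by_cases hva : v = a
            · subst hva; rw [hdeg]; omega
            · by_cases hvb : v = b
              · subst hvb; rw [hk]
              · rw [← hpres v ⟨hv, hva⟩ hvb]
                exact hall v ⟨hv, hva⟩

lemma end_not_mem_takeUntil [DecidableEq V] {p : G.Walk u v} (hp : p.IsPath)
    (hx : x ∈ p.support) (hxv : x ≠ v) : v ∉ (p.takeUntil x hx).support := by
  intro hmem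
  have hspec := congrArg SimpleGraph.Walk.support (p.take_spec hx).symm
  rw [SimpleGraph.Walk.support_append] at hspec
  have hsupp := hspec
  have hnd : p.support.Nodup := hp.2
  rw [hsupp] at hnd
  have hvr : v ∈ (p.dropUntil x hx).support.tail := by
    have hve : v ∈ (p.dropUntil x hx).support := SimpleGraph.Walk.end_mem_support _
    rw [SimpleGraph.Walk.support_eq_cons] at hve
    rcases List.mem_cons.mp hve with h | h
    · exact absurd h.symm hxv
    · exact h
  exact (List.disjoint_of_nodup_append hnd) hmem hvr

lemma exists_last [DecidableEq V] (M : Set V) : ∀ (n : ℕ) (u w : V) (r : G.Walk u w),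
    r.length ≤ n → u ∈ M →
    ∃ x, x ∈ M ∧ ∃ r' : G.Walk x w, (∀ s ∈ r'.support, s ∈ r.support) ∧
      (∀ y ∈ r'.support, y ∈ M → y = x) := by
  intro n
  induction n with
  | zero =>
    intro u w r hlen hu
    cases r with
    | nil => exact ⟨u, hu, .nil, by simp, by simp⟩
    | cons h r₁ => simp [SimpleGraph.Walk.length_cons] at hlen
  | succ n ih =>
    intro u w r hlen hu
    cases r with
    | nil => exact ⟨u, hu, .nil, by simp, by simp⟩
    | @cons _ z _ h r₁ =>
      rw [SimpleGraph.Walk.length_cons, Nat.succ_le_succ_iff] at hlen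
      by_cases hex : ∃ y ∈ r₁.support, y ∈ M
      · obtain ⟨y, hy, hyM⟩ := hex
        have hlen2 : (r₁.dropUntil y hy).length ≤ n :=
          le_trans (SimpleGraph.Walk.length_dropUntil_le r₁ hy) hlen
        obtain ⟨x, hxM, r', h1, h2⟩ := ih y w (r₁.dropUntil y hy) hlen2 hyM
        refine ⟨x, hxM, r', fun s hs => ?_, h2⟩
        have := r₁.support_dropUntil_subset hy (h1 s hs)
        simp [this]
      · push_neg at hex
        refine ⟨u, hu, .cons h r₁, by simp, ?_⟩
        intro y hy hyM
        rw [SimpleGraph.Walk.support_cons, List.mem_cons] at hy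
        rcases hy with rfl | hy
        · rfl
        · exact absurd hyM (hex y hy)

lemma buildPaths [DecidableEq V] (p q : G.Walk u v) (hp : p.IsPath) (hq : q.IsPath)
    (hpq : InternallyDisjoint p q) (hvw : G.Adj v w) (hwq : w ∉ q.support)
    (rr : G.Walk x w) (hrr : rr.IsPath) (hxp : x ∈ p.support) (hvrr : v ∉ rr.support)
    (hlast : ∀ y ∈ rr.support, (y ∈ p.support ∨ y ∈ q.support) → y = x) :
    ∃ P Q : G.Walk u w, P.IsPath ∧ Q.IsPath ∧ P ≠ Q ∧ InternallyDisjoint P Q := by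
  have hxrr : x ∈ rr.support := rr.start_mem_support
  have hxv : x ≠ v := fun h => hvrr (h ▸ hxrr)
  set t := p.takeUntil x hxp with htdef
  have ht : t.IsPath := hp.takeUntil hxp
  have hvt : v ∉ t.support := end_not_mem_takeUntil hp hxp hxv
  have htsub : ∀ s ∈ t.support, s ∈ p.support := fun s hs =>
    p.support_takeUntil_subset hxp hs
  have hrrnd : rr.support.Nodup := hrr.2
  have hxtail : x ∉ rr.support.tail := by
    have := hrrnd
    rw [SimpleGraph.Walk.support_eq_cons] at this
    exact (List.nodup_cons.mp this).1
  have htailsub : ∀ s ∈ rr.support.tail, s ∈ rr.support := by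
    intro s hs; rw [SimpleGraph.Walk.support_eq_cons]; exact List.mem_cons_of_mem _ hs
  have hdisj : ∀ s ∈ t.support, s ∉ rr.support.tail := by
    intro s hst hsrt
    have hsx : s = x := hlast s (htailsub s hsrt) (Or.inl (htsub s hst))
    subst hsx
    exact hxtail hsrt
  refine ⟨t.append rr, (SimpleGraph.Walk.cons hvw.symm q.reverse).reverse, ?_, ?_, ?_, ?_⟩
  · rw [SimpleGraph.Walk.isPath_def, SimpleGraph.Walk.support_append]
    refine List.Nodup.append ht.2 ?_ ?_
    · have := hrrnd; rw [SimpleGraph.Walk.support_eq_cons] at this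
      exact (List.nodup_cons.mp this).2
    · rw [List.disjoint_left]; exact hdisj
  · rw [SimpleGraph.Walk.isPath_reverse_iff, SimpleGraph.Walk.cons_isPath_iff]
    refine ⟨hq.reverse, ?_⟩
    rw [SimpleGraph.Walk.support_reverse, List.mem_reverse]
    exact hwq
  · intro hPQ
    have hvQ : v ∈ ((SimpleGraph.Walk.cons hvw.symm q.reverse).reverse).support := by
      rw [SimpleGraph.Walk.support_reverse, List.mem_reverse,
        SimpleGraph.Walk.support_cons]
      exact List.mem_cons_of_mem _ (by
        rw [SimpleGraph.Walk.support_reverse, List.mem_reverse]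
        exact q.end_mem_support)
    rw [← hPQ] at hvQ
    rw [SimpleGraph.Walk.support_append, List.mem_append] at hvQ
    rcases hvQ with h | h
    · exact hvt h
    · exact hvrr (htailsub v h)
  · intro y hyP hyQ
    have hyQ' : y = w ∨ y ∈ q.support := by
      rw [SimpleGraph.Walk.support_reverse, List.mem_reverse,
        SimpleGraph.Walk.support_cons, List.mem_cons] at hyQ
      rcases hyQ with h | h
      · exact Or.inl h
      · rw [SimpleGraph.Walk.support_reverse, List.mem_reverse] at h
        exact Or.inr h
    rcases hyQ' with rfl | hyq
    · exact Or.inr rfl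
    rw [SimpleGraph.Walk.support_append, List.mem_append] at hyP
    rcases hyP with h | h
    · rcases hpq y (htsub y h) hyq with rfl | rfl
      · exact Or.inl rfl
      · exact absurd h hvt
    · have : y = x := hlast y (htailsub y h) (Or.inr hyq)
      subst this
      exact absurd h hxtail

lemma buildPathsB [DecidableEq V] (p q : G.Walk u v) (hp : p.IsPath) (hq : q.IsPath)
    (hpq : InternallyDisjoint p q) (hvw : G.Adj v w) (hwp : w ∈ p.support)
    (hwq : w ∉ q.support) :
    ∃ P Q : G.Walk u w, P.IsPath ∧ Q.IsPath ∧ P ≠ Q ∧ InternallyDisjoint P Q := by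
  have hwv : w ≠ v := fun h => G.irrefl (h ▸ hvw)
  set t := p.takeUntil w hwp with htdef
  have ht : t.IsPath := hp.takeUntil hwp
  have hvt : v ∉ t.support := end_not_mem_takeUntil hp hwp hwv
  have htsub : ∀ s ∈ t.support, s ∈ p.support := fun s hs =>
    p.support_takeUntil_subset hwp hs
  refine ⟨t, (SimpleGraph.Walk.cons hvw.symm q.reverse).reverse, ht, ?_, ?_, ?_⟩
  · rw [SimpleGraph.Walk.isPath_reverse_iff, SimpleGraph.Walk.cons_isPath_iff]
    refine ⟨hq.reverse, ?_⟩
    rw [SimpleGraph.Walk.support_reverse, List.mem_reverse]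
    exact hwq
  · intro hPQ
    have hvQ : v ∈ ((SimpleGraph.Walk.cons hvw.symm q.reverse).reverse).support := by
      rw [SimpleGraph.Walk.support_reverse, List.mem_reverse,
        SimpleGraph.Walk.support_cons]
      exact List.mem_cons_of_mem _ (by
        rw [SimpleGraph.Walk.support_reverse, List.mem_reverse]
        exact q.end_mem_support)
    rw [← hPQ] at hvQ
    exact hvt hvQ
  · intro y hyP hyQ
    have hyQ' : y = w ∨ y ∈ q.support := by
      rw [SimpleGraph.Walk.support_reverse, List.mem_reverse,
        SimpleGraph.Walk.support_cons, List.mem_cons] at hyQ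
      rcases hyQ with h | h
      · exact Or.inl h
      · rw [SimpleGraph.Walk.support_reverse, List.mem_reverse] at h
        exact Or.inr h
    rcases hyQ' with rfl | hyq
    · exact Or.inr rfl
    rcases hpq y (htsub y hyP) hyq with rfl | rfl
    · exact Or.inl rfl
    · exact absurd hyP hvt

lemma whitney [Fintype V] (hconn : G.Connected) (hcard : 3 ≤ Fintype.card V)
    (hnc : ∀ y (a b : V), a ≠ y → b ≠ y → reachIn G (Set.univ \ {y}) a b) :
    Biconnected G := by
  haveI := Classical.decEq V
  suffices h : ∀ (n : ℕ) (u w : V), u ≠ w → G.dist u w ≤ n →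
      ∃ P Q : G.Walk u w, P.IsPath ∧ Q.IsPath ∧ P ≠ Q ∧ InternallyDisjoint P Q by
    intro u w huw
    exact h (G.dist u w) u w huw le_rfl
  intro n
  induction n with
  | zero =>
    intro u w huw hd
    exact absurd hd (by have := hconn.pos_dist_of_ne huw; omega)
  | succ n ih =>
    intro u w huw hd
    by_cases hadj : G.Adj u w
    · -- adjacent case
      have hex : ∃ c : V, c ≠ u ∧ c ≠ w := by
        by_contra hcon
        push_neg at hcon
        have hsub : (Finset.univ : Finset V) ⊆ {u, w} := by
          intro c _
          rcases eq_or_ne c u with rfl | h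
          · simp
          · simp [hcon c h]
        have := Finset.card_le_card hsub
        have h2 : ({u, w} : Finset V).card ≤ 2 :=
          le_trans (Finset.card_insert_le _ _) (by simp)
        rw [Finset.card_univ] at this
        omega
      obtain ⟨c, hcu, hcw⟩ := hex
      obtain ⟨z, hz, -⟩ := reachIn_first_step (hnc u w c (Ne.symm huw) hcu)
        (fun h => hcw h.symm)
      have hwz : G.Adj w z := hz.1
      have hzu : z ≠ u := by
        have := hz.2.2.2
        simpa using this
      have hzw : z ≠ w := hwz.ne'
      obtain ⟨W₂, hW₂⟩ := walk_of_reachIn (hnc w z u hzw huw)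
        ⟨trivial, hzw⟩
      set s := W₂.bypass with hsdef
      have hs : s.IsPath := W₂.bypass_isPath
      have hws : w ∉ s.support := by
        intro hmem
        have := hW₂ w (W₂.support_bypass_subset hmem)
        simp at this
      refine ⟨hadj.toWalk, (SimpleGraph.Walk.cons hwz s).reverse, ?_, ?_, ?_, ?_⟩
      · rw [SimpleGraph.Walk.isPath_def]
        simp [SimpleGraph.Adj.toWalk, huw]
      · rw [SimpleGraph.Walk.isPath_reverse_iff, SimpleGraph.Walk.cons_isPath_iff]
        exact ⟨hs, hws⟩
      · intro hPQ
        have h1 : (hadj.toWalk : G.Walk u w).length = 1 := rfl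
        have h2 := congrArg SimpleGraph.Walk.length hPQ
        rw [h1, SimpleGraph.Walk.length_reverse, SimpleGraph.Walk.length_cons] at h2
        have : s.length ≠ 0 := fun h => hzu (SimpleGraph.Walk.eq_of_length_eq_zero h)
        omega
      · intro y hy _
        have : y ∈ ([u, w] : List V) := hy
        simpa using this
    · -- non-adjacent case
      have hd2 : 2 ≤ G.dist u w := by
        have h1 : G.dist u w ≠ 0 := by
          have := hconn.pos_dist_of_ne huw; omega
        have h2 : G.dist u w ≠ 1 := fun h => hadj (SimpleGraph.dist_eq_one_iff_adj.mp h)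
        omega
      obtain ⟨W, hWlen⟩ := hconn.exists_walk_length_eq_dist u w
      obtain ⟨v, hwv, W₁, hW₁eq⟩ := W.reverse.exists_eq_cons_of_ne (Ne.symm huw)
      have hlenrev : W.reverse.length = G.dist u w := by
        rw [SimpleGraph.Walk.length_reverse, hWlen]
      have hW₁len : W₁.length = G.dist u w - 1 := by
        have := congrArg SimpleGraph.Walk.length hW₁eq
        rw [hlenrev, SimpleGraph.Walk.length_cons] at this
        omega
      have hdogv : G.dist v u ≤ n := by
        have := G.dist_le W₁
        omega
      have hduv : G.dist u v ≤ n := by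
        rwa [SimpleGraph.dist_comm]
      have huv : u ≠ v := by
        rintro rfl
        exact hadj hwv.symm
      obtain ⟨p, q, hp, hq, hne, hpq⟩ := ih u v huv hduv
      have hvw : G.Adj v w := hwv.symm
      have hwvne : w ≠ v := hvw.ne'
      by_cases hwP : w ∈ p.support
      · have hwq : w ∉ q.support := by
          intro hwq
          rcases hpq w hwP hwq with rfl | rfl
          · exact huw rfl
          · exact hwvne rfl
        exact buildPathsB p q hp hq hpq hvw hwP hwq
      · by_cases hwQ : w ∈ q.support
        · exact buildPathsB q p hq hp (fun y h1 h2 => hpq y h2 h1) hvw hwQ hwP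
        · obtain ⟨r, hr⟩ := walk_of_reachIn (hnc v u w huv (Ne.symm hwvne).symm)
            ⟨trivial, huv⟩
          have hvr : v ∉ r.support := by
            intro hmem
            have := hr v hmem
            simp at this
          obtain ⟨x, hxM, r', hr'sub, hlastr'⟩ :=
            exists_last {y | y ∈ p.support ∨ y ∈ q.support} r.length u w r le_rfl
              (Or.inl p.start_mem_support)
          set rr := r'.bypass with hrrdef
          have hrr : rr.IsPath := r'.bypass_isPath
          have hrrsub : ∀ s ∈ rr.support, s ∈ r'.support := fun s hs =>
            r'.support_bypass_subset hs
          have hvrr : v ∉ rr.support := fun hmem =>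
            hvr (hr'sub v (hrrsub v hmem))
          have hlast : ∀ y ∈ rr.support, (y ∈ p.support ∨ y ∈ q.support) → y = x :=
            fun y hy hyM => hlastr' y (hrrsub y hy) hyM
          rcases hxM with hxp | hxq
          · exact buildPaths p q hp hq hpq hvw hwQ rr hrr hxp hvrr hlast
          · exact buildPaths q p hq hp (fun y h1 h2 => hpq y h2 h1) hvw hwP rr hrr
              hxq hvrr (fun y hy hyM => hlast y hy hyM.symm)

/-- One side of a degree-2 cut vertex in a graph with no essential cut vertex
is a path. -/
lemma side [Fintype V] (hempty : oneCutsIn G Set.univ = ∅)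
    (hay : a ≠ y) (hna : G.Adj y b) (hra : reachIn G (Set.univ \ {y}) a b)
    (hnb_not : c ∉ comp G y a) (hNy : G.neighborSet y = {b, c}) :
    (∃ w ∈ comp G y a, (G.neighborSet w).ncard = 1) ∧
      (∀ v ∈ comp G y a, (G.neighborSet v).ncard ≤ 2) := by
  set Sa := componentOf G y a with hSa
  have hbC : b ∈ comp G y a := hra
  have hbSa : b ∈ Sa := Or.inl hbC
  have hySa : y ∈ Sa := Or.inr rfl
  have hNSub : ∀ w', w' ∈ comp G y a → G.neighborSet w' ∩ Sa = G.neighborSet w' := by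
    intro w' hw'
    apply Set.Subset.antisymm (Set.inter_subset_left)
    intro z hz
    refine ⟨hz, ?_⟩
    by_cases hzy : z = y
    · exact Or.inr hzy
    · exact Or.inl (C_closed hay hw' hz hzy)
  have hcNy : c ∈ G.neighborSet y := by rw [hNy]; exact Or.inr rfl
  have hcy : c ≠ y := fun h => G.irrefl (h ▸ hcNy)
  have hNySa : G.neighborSet y ∩ Sa = {b} := by
    apply Set.Subset.antisymm
    · rintro z ⟨hz1, hz2⟩
      rw [hNy] at hz1
      rcases hz1 with rfl | hz1
      · rfl
      · rw [Set.mem_singleton_iff] at hz1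
        subst hz1
        exfalso
        rcases hz2 with h | h
        · exact hnb_not h
        · rw [Set.mem_singleton_iff] at h
          exact hcy h
    · intro z hz
      rw [Set.mem_singleton_iff] at hz
      subst hz
      exact ⟨hna, hbSa⟩
  have hdegy : (G.neighborSet y ∩ Sa).ncard = 1 := by rw [hNySa]; simp
  have hcompSa : comp G y a ⊆ Sa := fun s hs => Or.inl hs
  have hconnSa : ∀ c' ∈ Sa, ∀ d' ∈ Sa, reachIn G Sa c' d' := by
    have hcc : ∀ c' ∈ comp G y a, ∀ d' ∈ comp G y a, reachIn G Sa c' d' :=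
      fun c' hc' d' hd' => reachIn_mono hcompSa (comp_reach hay hc' hd')
    have hyc : ∀ d' ∈ comp G y a, reachIn G Sa y d' := fun d' hd' =>
      Relation.ReflTransGen.head ⟨hna, hySa, hbSa⟩ (hcc b hbC d' hd')
    intro c' hc' d' hd'
    rcases hc' with hc' | hc' <;> rcases hd' with hd' | hd'
    · exact hcc c' hc' d' hd'
    · rw [Set.mem_singleton_iff] at hd'; subst hd'
      exact reachIn.symm (hyc c' hc')
    · rw [Set.mem_singleton_iff] at hc'; subst hc'
      exact hyc d' hd'
    · rw [Set.mem_singleton_iff] at hc' hd'; subst hc'; subst hd'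
      exact Relation.ReflTransGen.refl
  have hSa2 : 2 ≤ Sa.ncard := by
    have hyb : y ≠ b := G.ne_of_adj hna
    have hpair : ({y, b} : Set V).ncard = 2 := Set.ncard_pair hyb
    rw [← hpair]
    apply Set.ncard_le_ncard _ (Set.toFinite _)
    intro s hs
    rcases hs with rfl | hs
    · exact hySa
    · rw [Set.mem_singleton_iff] at hs; subst hs; exact hbSa
  rcases lemD Sa.ncard Sa y le_rfl hconnSa hySa hdegy hSa2 with
    ⟨z, hzSa, hzcut, hzdeg⟩ | ⟨w, hwSa, hwy, hdegw, hall⟩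
  · exfalso
    have hzy : z ≠ y := by
      rintro rfl
      rw [hdegy] at hzdeg
      omega
    have hz1 : cutIn G Set.univ z := cut_lift hay hzy hzcut
    have hz2 : 3 ≤ (G.neighborSet z ∩ Set.univ).ncard := by
      refine le_trans hzdeg (Set.ncard_le_ncard ?_ (Set.toFinite _))
      exact Set.inter_subset_inter_right _ (Set.subset_univ _)
    have : z ∈ oneCutsIn G Set.univ := ⟨hz1, hz2⟩
    rw [hempty] at this
    exact this
  · have hwC : w ∈ comp G y a := by
      rcases hwSa with h | h
      · exact h
      · exact absurd h hwy
    constructor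
    · exact ⟨w, hwC, by rw [← hNSub w hwC]; exact hdegw⟩
    · intro v' hv'
      rw [← hNSub v' hv']
      exact hall v' (hcompSa hv')

/-- For a connected graph `Γ` with simplicial model `G`:
(1) if `G` has at least one 1-cut, then it has a 1-cut `x` such that every
`{x}`-component has strictly fewer 1-cuts (in its own minimal simplicial
model) than `G`; and (2) `G` has no 1-cuts if and only if it is biconnected,
a single vertex, or homeomorphic to the single-edge graph `K₁,₁`. -/
theorem oneCut_induction_and_characterization
    [Fintype V] (G : SimpleGraph V) (hconn : G.Connected) :
    ((oneCutsIn G Set.univ).Nonempty →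
      ∃ x ∈ oneCutsIn G Set.univ, ∀ a : V, a ≠ x →
        (oneCutsIn G (componentOf G x a)).ncard
          < (oneCutsIn G Set.univ).ncard) ∧
    (oneCutsIn G Set.univ = ∅ ↔
      (Biconnected G ∨ (∃ v : V, ∀ w : V, w = v) ∨ IsPathGraph G)) := by
  constructor
  · -- Part 1
    rintro ⟨x, hx⟩
    refine ⟨x, hx, ?_⟩
    intro a ha
    have hsub : oneCutsIn G (componentOf G x a) ⊆ oneCutsIn G Set.univ \ {x} := by
      rintro y ⟨hcut, hdeg⟩
      have hyx : y ≠ x := by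
        rintro rfl
        exact not_cut_x ha hcut
      exact ⟨⟨cut_lift ha hyx hcut,
        le_trans hdeg (Set.ncard_le_ncard
          (Set.inter_subset_inter_right _ (Set.subset_univ _)) (Set.toFinite _))⟩, hyx⟩
    calc (oneCutsIn G (componentOf G x a)).ncard
        ≤ (oneCutsIn G Set.univ \ {x}).ncard :=
          Set.ncard_le_ncard hsub (Set.toFinite _)
      _ < (oneCutsIn G Set.univ).ncard :=
          Set.ncard_diff_singleton_lt_of_mem hx (Set.toFinite _)
  · constructor
    · intro hempty
      by_cases hcut : ∃ y, cutIn G Set.univ y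
      · right; right
        obtain ⟨y, -, a, b, ⟨-, hay'⟩, ⟨-, hby'⟩, hnr⟩ := hcut
        have hay : a ≠ y := by simpa using hay'
        have hby : b ≠ y := by simpa using hby'
        obtain ⟨na, hna_adj, hna_reach⟩ := reach_nbr hconn hay
        obtain ⟨nb, hnb_adj, hnb_reach⟩ := reach_nbr hconn hby
        have hne : na ≠ nb := by
          rintro rfl
          exact hnr (Relation.ReflTransGen.trans hna_reach (reachIn.symm hnb_reach))
        have hdegy2 : (G.neighborSet y).ncard ≤ 2 := by
          by_contra hcon
          push_neg at hcon
          have : y ∈ oneCutsIn G Set.univ :=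
            ⟨⟨trivial, a, b, ⟨trivial, hay'⟩, ⟨trivial, hby'⟩, hnr⟩,
              by rw [Set.inter_univ]; omega⟩
          rw [hempty] at this
          exact this
        have hNy : G.neighborSet y = {na, nb} := by
          have hsub2 : ({na, nb} : Set V) ⊆ G.neighborSet y := by
            rintro z (rfl | hz)
            · exact hna_adj
            · rw [Set.mem_singleton_iff] at hz; subst hz; exact hnb_adj
          refine (Set.eq_of_subset_of_ncard_le hsub2 ?_ (Set.toFinite _)).symm
          rw [Set.ncard_pair hne]
          exact hdegy2
        have hnb_notA : nb ∉ comp G y a := fun h =>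
          hnr (Relation.ReflTransGen.trans h (reachIn.symm hnb_reach))
        have hna_notB : na ∉ comp G y b := fun h =>
          hnr (Relation.ReflTransGen.trans hna_reach (reachIn.symm h))
        obtain ⟨⟨wa, hwaC, hwa1⟩, hallA⟩ :=
          side hempty hay hna_adj hna_reach hnb_notA hNy
        obtain ⟨-, hallB⟩ :=
          side hempty hby hnb_adj hnb_reach hna_notB (by rw [hNy, Set.pair_comm])
        refine ⟨hconn, ?_, ⟨wa, hwa1⟩⟩
        intro v
        by_cases hvy : v = y
        · subst hvy
          rw [hNy, Set.ncard_pair hne]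
        · obtain ⟨u', hu'adj, hu'reach⟩ := reach_nbr hconn hvy
          have hu'N : u' ∈ G.neighborSet y := hu'adj
          rw [hNy] at hu'N
          rcases hu'N with rfl | hu'N
          · exact hallA v (Relation.ReflTransGen.trans hna_reach (reachIn.symm hu'reach))
          · rw [Set.mem_singleton_iff] at hu'N
            subst hu'N
            exact hallB v (Relation.ReflTransGen.trans hnb_reach (reachIn.symm hu'reach))
      · have hnc : ∀ y (a b : V), a ≠ y → b ≠ y →
            reachIn G (Set.univ \ {y}) a b := by
          intro y a b ha hb
          by_contra h
          exact hcut ⟨y, trivial, a, b, ⟨trivial, by simpa using ha⟩,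
            ⟨trivial, by simpa using hb⟩, h⟩
        have hpos : 0 < Fintype.card V := Fintype.card_pos_iff.mpr hconn.nonempty
        by_cases h1 : Fintype.card V = 1
        · right; left; exact Fintype.card_eq_one_iff.mp h1
        · by_cases h2 : Fintype.card V = 2
          · right; right
            obtain ⟨u0, v0, huv0, huniv⟩ := Nat.card_eq_two_iff.mp
              (show Nat.card V = 2 by rw [Nat.card_eq_fintype_card]; exact h2)
            have hall2 : ∀ z : V, z = u0 ∨ z = v0 := by
              intro z
              have : z ∈ ({u0, v0} : Set V) := by rw [huniv]; trivial
              rcases this with h | h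
              · exact Or.inl h
              · exact Or.inr h
            have hadj : G.Adj u0 v0 := by
              obtain ⟨W⟩ := hconn.preconnected u0 v0
              obtain ⟨z1, hz1, W', hW'⟩ := W.exists_eq_cons_of_ne huv0
              rcases hall2 z1 with rfl | rfl
              · exact absurd hz1 (G.irrefl)
              · exact hz1
            have hNu : G.neighborSet u0 = {v0} := by
              apply Set.Subset.antisymm
              · intro z hz
                rcases hall2 z with rfl | rfl
                · exact absurd hz (G.irrefl)
                · rfl
              · intro z hz
                rw [Set.mem_singleton_iff] at hz; subst hz; exact hadj
            have hNv : G.neighborSet v0 = {u0} := by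
              apply Set.Subset.antisymm
              · intro z hz
                rcases hall2 z with rfl | rfl
                · rfl
                · exact absurd hz (G.irrefl)
              · intro z hz
                rw [Set.mem_singleton_iff] at hz; subst hz; exact hadj.symm
            refine ⟨hconn, ?_, ⟨u0, by rw [hNu]; simp⟩⟩
            intro v
            rcases hall2 v with rfl | rfl
            · rw [hNu]; simp
            · rw [hNv]; simp
          · have h3 : 3 ≤ Fintype.card V := by omega
            exact Or.inl (whitney hconn h3 hnc)
    · intro h
      rw [Set.eq_empty_iff_forall_notMem]
      rintro y ⟨⟨-, a, b, ⟨-, hay'⟩, ⟨-, hby'⟩, hnr⟩, hdeg⟩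
      have hay : a ≠ y := by simpa using hay'
      have hby : b ≠ y := by simpa using hby'
      rcases h with hbi | ⟨v0, hv0⟩ | ⟨-, hdeg2, -⟩
      · by_cases hab : a = b
        · subst hab; exact hnr Relation.ReflTransGen.refl
        obtain ⟨p, q, hp, hq, hne, hpq⟩ := hbi a b hab
        have hnotboth : y ∉ p.support ∨ y ∉ q.support := by
          by_contra hcon
          push_neg at hcon
          rcases hpq y hcon.1 hcon.2 with rfl | rfl
          · exact hay rfl
          · exact hby rfl
        rcases hnotboth with hns | hns
        · refine hnr (reachIn_of_walk (W := p) ?_)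
          intro s hs
          refine ⟨trivial, fun h' => ?_⟩
          rw [Set.mem_singleton_iff] at h'
          subst h'
          exact hns hs
        · refine hnr (reachIn_of_walk (W := q) ?_)
          intro s hs
          refine ⟨trivial, fun h' => ?_⟩
          rw [Set.mem_singleton_iff] at h'
          subst h'
          exact hns hs
      · exact hay ((hv0 a).trans (hv0 y).symm)
      · rw [Set.inter_univ] at hdeg
        have := hdeg2 y
        omega


end GraphOneCuts
end
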